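/- arXiv:math/0601174 — 5 statements merged into one kernel-verified Lean document; each statement's English description precedes it below -/
import Mathlib

section
/- Suppose the Markov kernel P satisfies PE(V, c, α, b, C) with α > 3/4 and C = {x : V(x) ≤ d} a sublevel set, and suppose every sublevel set {x : V(x) ≤ r} is small. Then the chain is tame with respect to the scale function V^{1/2}. -/
open MeasureTheory ProbabilityTheory ENNReal Set

/-- `n`-fold composition power of a kernel. -/
noncomputable def kpow {𝓧 : Type*} [MeasurableSpace 𝓧]
    (P : ProbabilityTheory.Kernel 𝓧 𝓧) : ℕ → ProbabilityTheory.Kernel 𝓧 𝓧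
  | 0 => ProbabilityTheory.Kernel.id
  | n + 1 => P.comp (kpow P n)

/-- The taming function `F(z) = ⌈λ z^δ⌉` for `z > d'` and `F(z) = 1` for `z ≤ d'`. -/
noncomputable def tamingF (lam δ d' : ℝ) (z : ℝ) : ℕ :=
  if z ≤ d' then 1 else ⌈lam * z ^ δ⌉₊

/-- The bound `δ⁻¹·log(1−δ)`, interpreted as `−1` when `δ = 0`. -/
noncomputable def tameBound (δ : ℝ) : ℝ :=
  if δ = 0 then -1 else δ⁻¹ * Real.log (1 - δ)

/-- `C` is a small set for the kernel `P`. -/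
def IsSmallSet {𝓧 : Type*} [MeasurableSpace 𝓧]
    (P : ProbabilityTheory.Kernel 𝓧 𝓧) (C : Set 𝓧) : Prop :=
  ∃ m : ℕ, 0 < m ∧ ∃ ε : ℝ, 0 < ε ∧ ε ≤ 1 ∧ ∃ ν : Measure 𝓧, IsProbabilityMeasure ν ∧
    ∀ x ∈ C, ∀ E : Set 𝓧, MeasurableSet E → ENNReal.ofReal ε * ν E ≤ (kpow P m) x E

/-- The chain with kernel `P` is *tame* with respect to the scale function `V`. -/
def IsTame {𝓧 : Type*} [MeasurableSpace 𝓧]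
    (P : ProbabilityTheory.Kernel 𝓧 𝓧) (V : 𝓧 → ℝ) : Prop :=
  ∃ d' : ℝ, 1 ≤ d' ∧ IsSmallSet P {x | V x ≤ d'} ∧
    ∃ lam : ℝ, 0 < lam ∧ ∃ δ ∈ Set.Ico (0 : ℝ) 1, ∃ β ∈ Set.Ioo (0 : ℝ) 1, ∃ b' : ℝ,
      Real.log β < tameBound δ ∧
      ∀ x, ∫⁻ y, ENNReal.ofReal (V y) ∂((kpow P (tamingF lam δ d' (V x))) x)
        ≤ ENNReal.ofReal (β * V x + Set.indicator {x' | V x' ≤ d'} (fun _ => b') x)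

section Stmt11Aux

variable {𝓧 : Type*} [MeasurableSpace 𝓧]

lemma kpow_sfinite (Q : ProbabilityTheory.Kernel 𝓧 𝓧) [IsSFiniteKernel Q] (n : ℕ) :
    IsSFiniteKernel (kpow Q n) := by
  induction n with
  | zero => exact (by rw [kpow]; infer_instance)
  | succ n ih => rw [kpow]; exact @Kernel.IsSFiniteKernel.comp _ _ _ _ _ _ Q _ _ ih

lemma kpow_markov (Q : ProbabilityTheory.Kernel 𝓧 𝓧) [IsMarkovKernel Q] (n : ℕ) :
    IsMarkovKernel (kpow Q n) := by
  induction n with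
  | zero => exact (by rw [kpow]; infer_instance)
  | succ n ih => rw [kpow]; exact @Kernel.IsMarkovKernel.comp _ _ _ _ _ _ Q _ _ ih

lemma kpow_succ' (Q : ProbabilityTheory.Kernel 𝓧 𝓧) [IsSFiniteKernel Q] (n : ℕ) :
    kpow Q (n + 1) = (kpow Q n).comp Q := by
  induction n with
  | zero => rw [kpow, kpow, kpow, Kernel.comp_id, Kernel.id_comp]
  | succ n ih =>
      calc kpow Q (n + 2) = Q.comp (kpow Q (n + 1)) := by rw [kpow]
        _ = Q.comp ((kpow Q n).comp Q) := by rw [ih]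
        _ = (Q.comp (kpow Q n)).comp Q := (Kernel.comp_assoc Q (kpow Q n) Q).symm
        _ = (kpow Q (n + 1)).comp Q := by
              rw [show kpow Q (n + 1) = Q.comp (kpow Q n) from by rw [kpow]]

lemma pit_zero (Q : ProbabilityTheory.Kernel 𝓧 𝓧) {g : 𝓧 → ℝ≥0∞} (hg : Measurable g) (x : 𝓧) :
    ∫⁻ y, g y ∂(kpow Q 0 x) = g x := by
  rw [kpow, Kernel.id_apply, lintegral_dirac' _ hg]

lemma pit_succ (Q : ProbabilityTheory.Kernel 𝓧 𝓧) [IsSFiniteKernel Q] {g : 𝓧 → ℝ≥0∞}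
    (hg : Measurable g) (n : ℕ) (x : 𝓧) :
    ∫⁻ y, g y ∂(kpow Q (n + 1) x) = ∫⁻ z, (∫⁻ y, g y ∂(kpow Q n z)) ∂(Q x) := by
  rw [kpow_succ', Kernel.lintegral_comp _ _ _ hg]

lemma pit_succ_right (Q : ProbabilityTheory.Kernel 𝓧 𝓧) {g : 𝓧 → ℝ≥0∞}
    (hg : Measurable g) (n : ℕ) (x : 𝓧) :
    ∫⁻ y, g y ∂(kpow Q (n + 1) x) = ∫⁻ z, (∫⁻ y, g y ∂(Q z)) ∂(kpow Q n x) := by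
  rw [show kpow Q (n + 1) = Q.comp (kpow Q n) from by rw [kpow]]
  exact Kernel.lintegral_comp Q (kpow Q n) x hg

lemma pit_meas (Q : ProbabilityTheory.Kernel 𝓧 𝓧) [IsSFiniteKernel Q] {g : 𝓧 → ℝ≥0∞}
    (hg : Measurable g) (n : ℕ) :
    Measurable (fun x => ∫⁻ y, g y ∂(kpow Q n x)) := by
  haveI := kpow_sfinite Q n
  exact Measurable.lintegral_kernel_prod_right' (κ := kpow Q n) (hg.comp measurable_snd)

private lemma rpow_tangent {p θ : ℝ} (hp : 0 ≤ p) (hθ0 : 0 ≤ θ) (hθ1 : θ ≤ 1) :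
    p ^ θ ≤ θ * p + (1 - θ) := by
  have h := Real.geom_mean_le_arith_mean2_weighted hθ0 (by linarith : (0:ℝ) ≤ 1 - θ) hp
    zero_le_one (by ring)
  simpa using h

private lemma rpow_tangent' {v s θ : ℝ} (hv : 0 ≤ v) (hs : 0 < s) (hθ0 : 0 ≤ θ) (hθ1 : θ ≤ 1) :
    v ^ θ ≤ θ * s ^ (θ - 1) * v + (1 - θ) * s ^ θ := by
  have h := rpow_tangent (div_nonneg hv hs.le) hθ0 hθ1
  have hsθ : (0:ℝ) < s ^ θ := Real.rpow_pos_of_pos hs θ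
  have h2 := mul_le_mul_of_nonneg_right h hsθ.le
  rw [Real.div_rpow hv hs.le, div_mul_cancel₀ _ (ne_of_gt hsθ)] at h2
  have hpow : s ^ (θ - 1) * s = s ^ θ := by
    rw [← Real.rpow_add_one hs.ne' (θ - 1)]
    congr 1; ring
  calc v ^ θ ≤ (θ * (v / s) + (1 - θ)) * s ^ θ := h2
    _ = θ * ((s ^ (θ-1) * s) / s) * v + (1 - θ) * s ^ θ := by
        rw [hpow]; field_simp
    _ = θ * s ^ (θ - 1) * v + (1 - θ) * s ^ θ := by
        rw [mul_div_assoc, div_self hs.ne', mul_one]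

private lemma rpow_addsub {u v p : ℝ} (hu : 0 ≤ u) (hv : 0 ≤ v) (hp : 0 ≤ p) (hp1 : p ≤ 1) :
    (u + v) ^ p ≤ u ^ p + v ^ p := by
  have h := NNReal.rpow_add_le_add_rpow u.toNNReal v.toNNReal hp hp1
  rw [← Real.toNNReal_add hu hv] at h
  have h2 := NNReal.coe_le_coe.mpr h
  rw [NNReal.coe_add, NNReal.coe_rpow, NNReal.coe_rpow, NNReal.coe_rpow,
    Real.coe_toNNReal _ hu, Real.coe_toNNReal _ hv, Real.coe_toNNReal _ (add_nonneg hu hv)] at h2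
  exact h2

private lemma rpow_half_le_add_div {v a : ℝ} (hv : 0 ≤ v) (ha : 0 < a) :
    v ^ (1/2 : ℝ) ≤ a + v / a := by
  rw [← Real.sqrt_eq_rpow]
  have key : v ≤ (a + v/a)^2 := by
    have he : (a + v/a)^2 = a^2 + 2*v + (v/a)^2 := by field_simp; ring
    nlinarith [sq_nonneg a, sq_nonneg (v/a)]
  have h0 : 0 ≤ a + v/a := by positivity
  calc Real.sqrt v ≤ Real.sqrt ((a + v/a)^2) := Real.sqrt_le_sqrt key
    _ = a + v/a := Real.sqrt_sq h0

set_option maxHeartbeats 1000000 in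
private lemma final_real (c₂ β lam d' sD sb b u w N : ℝ)
    (hc₂ : 0 < c₂) (hβ0 : 0 < β) (hβ1 : β < 1)
    (hlam : 16 / (β^2*c₂) ≤ lam) (hlam1 : 1 ≤ lam)
    (hd'1 : 1 ≤ d') (hw : d' ≤ w) (hd'b : (lam+1)*b ≤ d') (hb : 0 < b)
    (hsD : 0 ≤ sD) (hsb : 0 ≤ sb)
    (hu1 : 1 ≤ u) (huw : u ≤ w)
    (hA : ((sD + (lam+1)*sb)/c₂) * (u*u) ≤ (β/4) * w)
    (hN1 : 1 ≤ N) (hNlow : lam * u ≤ N) (hNup : N ≤ lam * u + 1) :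
    (4*w/β)*(u/(N*c₂)) + (1/(4*w/β))*(w*w + N*b) + (sD + N*sb)*(u/c₂) ≤ β * w := by
  have hw1 : (1:ℝ) ≤ w := le_trans hd'1 hw
  have hw0 : (0:ℝ) < w := by linarith
  have hN0 : (0:ℝ) < N := by linarith
  have hu0 : (0:ℝ) < u := by linarith
  have hβc : (0:ℝ) < β^2*c₂ := by positivity
  have h16 : 16 ≤ lam * (β^2*c₂) := by
    have := (div_le_iff₀ hβc).mp hlam; linarith
  have h16u : 16*u ≤ β^2*c₂*N := by nlinarith [mul_le_mul_of_nonneg_right h16 hu0.le]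
  have hT1 : (4*w/β)*(u/(N*c₂)) ≤ β/4*w := by
    rw [div_mul_div_comm]
    rw [div_le_iff₀ (by positivity : (0:ℝ) < β*(N*c₂))]
    nlinarith [mul_le_mul_of_nonneg_left h16u hw0.le]
  have hNb : N*b ≤ w*w := by
    have p1 : N*b ≤ (lam*u+1)*b := mul_le_mul_of_nonneg_right hNup hb.le
    have p2 : (lam*u+1)*b ≤ u*((lam+1)*b) := by nlinarith [mul_le_mul_of_nonneg_right hu1 hb.le]
    have p3 : u*((lam+1)*b) ≤ u*d' := mul_le_mul_of_nonneg_left hd'b hu0.le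
    have p4 : u*d' ≤ w*w := mul_le_mul huw hw (by linarith) hw0.le
    linarith
  have hT2 : (1/(4*w/β))*(w*w + N*b) ≤ β/2*w := by
    have he : (1/(4*w/β)) = β/(4*w) := one_div_div _ _
    rw [he]
    have h2a : β/(4*w)*(w*w + N*b) ≤ β/(4*w)*(2*(w*w)) :=
      mul_le_mul_of_nonneg_left (by linarith) (by positivity)
    have h2b : β/(4*w)*(2*(w*w)) = β/2*w := by field_simp; ring
    linarith
  have hT3 : (sD + N*sb)*(u/c₂) ≤ β/4*w := by
    have q0a : N*sb ≤ (lam*u+1)*sb := mul_le_mul_of_nonneg_right hNup hsb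
    have hl1 : (0:ℝ) ≤ lam+1 := by linarith
    have q0b : (1:ℝ)*((lam+1)*sb) ≤ u*((lam+1)*sb) :=
      mul_le_mul_of_nonneg_right hu1 (mul_nonneg hl1 hsb)
    have q0 : N*sb ≤ (lam+1)*sb*u := by nlinarith
    have q1 : sD + N*sb ≤ (sD + (lam+1)*sb)*u := by nlinarith [mul_le_mul_of_nonneg_left hu1 hsD]
    have q2 : (sD + N*sb)*(u/c₂) ≤ ((sD + (lam+1)*sb)*u)*(u/c₂) :=
      mul_le_mul_of_nonneg_right q1 (by positivity)
    have q3 : ((sD + (lam+1)*sb)*u)*(u/c₂) = ((sD + (lam+1)*sb)/c₂)*(u*u) := by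
      ring
    rw [q3] at q2
    linarith
  linarith

end Stmt11Aux

set_option maxHeartbeats 2000000 in
/-- Theorem 22 -/
theorem stmt_11 {𝓧 : Type*} [MeasurableSpace 𝓧]
    (P : ProbabilityTheory.Kernel 𝓧 𝓧) [ProbabilityTheory.IsMarkovKernel P]
    (V : 𝓧 → ℝ) (hVmeas : Measurable V) (hV1 : ∀ x, 1 ≤ V x)
    (c α b d : ℝ) (hα : α ∈ Set.Ioo (0 : ℝ) 1) (hα' : 3 / 4 < α)
    (hc : 0 < c) (hb : 0 < b)
    (C : Set 𝓧) (hCdef : C = {x | V x ≤ d})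
    (hPE : ∀ x, ∫⁻ y, ENNReal.ofReal (V y) ∂(P x)
      ≤ ENNReal.ofReal (V x - c * V x ^ α + C.indicator (fun _ => b) x))
    (hsmall : ∀ r : ℝ, IsSmallSet P {x | V x ≤ r}) :
    IsTame P (fun x => V x ^ (1 / 2 : ℝ)) := by
  obtain ⟨hα0, hα1⟩ := hα
  have hV0 : ∀ x, (0:ℝ) < V x := fun x => lt_of_lt_of_le one_pos (hV1 x)
  -- exponents
  set θ : ℝ := 1 - α with hθdef
  have hθ0 : 0 < θ := by rw [hθdef]; linarith
  set δ : ℝ := 2 - 2*α with hδdef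
  have hδθ : δ = 2*θ := by rw [hδdef, hθdef]; ring
  have hδ0 : 0 < δ := by rw [hδdef]; linarith
  have hδh : δ < 1/2 := by rw [hδdef]; linarith
  -- real-level scale function facts
  have hW1 : ∀ x, (1:ℝ) ≤ V x ^ (1/2:ℝ) := fun x => by
    calc (1:ℝ) = 1 ^ (1/2:ℝ) := (Real.one_rpow _).symm
      _ ≤ V x ^ (1/2:ℝ) := Real.rpow_le_rpow zero_le_one (hV1 x) (by norm_num)
  have hU1 : ∀ x, (1:ℝ) ≤ V x ^ θ := fun x => by
    calc (1:ℝ) = 1 ^ θ := (Real.one_rpow _).symm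
      _ ≤ V x ^ θ := Real.rpow_le_rpow zero_le_one (hV1 x) hθ0.le
  have hUW : ∀ x, V x ^ θ ≤ V x ^ (1/2:ℝ) := fun x =>
    Real.rpow_le_rpow_of_exponent_le (hV1 x) (by rw [hθdef]; linarith)
  have hWsq : ∀ x, V x ^ (1/2:ℝ) * V x ^ (1/2:ℝ) = V x := fun x => by
    rw [← Real.rpow_add (hV0 x)]; norm_num
  have hWδ : ∀ x, (V x ^ (1/2:ℝ)) ^ δ = V x ^ θ := fun x => by
    rw [← Real.rpow_mul (hV0 x).le]
    congr 1
    rw [hδθ]; ring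
  -- measurability
  have hCm : MeasurableSet C := by rw [hCdef]; exact hVmeas measurableSet_Iic
  have hVfm : Measurable (fun x => ENNReal.ofReal (V x)) := hVmeas.ennreal_ofReal
  have hWfm : Measurable (fun x => ENNReal.ofReal (V x ^ (1/2:ℝ))) :=
    (((Real.continuous_rpow_const (by norm_num : (0:ℝ) ≤ 1/2)).measurable).comp
      hVmeas).ennreal_ofReal
  have hUfm : Measurable (fun x => ENNReal.ofReal (V x ^ θ)) :=
    (((Real.continuous_rpow_const hθ0.le).measurable).comp hVmeas).ennreal_ofReal
  -- the drift function
  set sf : 𝓧 → ℝ := fun x => V x - c * V x ^ α + C.indicator (fun _ => b) x with hsf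
  have hPE' : ∀ x, ∫⁻ y, ENNReal.ofReal (V y) ∂(P x) ≤ ENNReal.ofReal (sf x) :=
    fun x => hPE x
  have hs1 : ∀ x, (1:ℝ) ≤ sf x := by
    intro x
    have h1 : (1:ℝ≥0∞) ≤ ∫⁻ y, ENNReal.ofReal (V y) ∂(P x) := by
      have he : ∫⁻ _, (1:ℝ≥0∞) ∂(P x) = 1 := by rw [lintegral_one, measure_univ]
      rw [← he]
      exact lintegral_mono fun y => ENNReal.one_le_ofReal.mpr (hV1 y)
    exact ENNReal.one_le_ofReal.mp (h1.trans (hPE' x))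
  have hs0 : ∀ x, (0:ℝ) < sf x := fun x => lt_of_lt_of_le one_pos (hs1 x)
  have hind : ∀ x, C.indicator (fun _ => b) x ≤ b := fun x => by
    by_cases h : x ∈ C
    · rw [Set.indicator_of_mem h]
    · rw [Set.indicator_of_notMem h]; exact hb.le
  have hsub : ∀ x, sf x ≤ V x + b := fun x => by
    have h0 : 0 ≤ c * V x ^ α := mul_nonneg hc.le (Real.rpow_nonneg (hV0 x).le α)
    have h1 := hind x
    rw [hsf]; dsimp only; linarith
  -- CORE comparison
  have hCORE : ∀ φ : ℝ, 0 < φ → φ ≤ 1 → ∀ x,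
      ∫⁻ y, ENNReal.ofReal (V y ^ φ) ∂(P x) ≤ ENNReal.ofReal (sf x ^ φ) := by
    intro φ hφ0 hφ1 x
    have hsx := hs0 x
    have hco : 0 ≤ (1 - φ) * sf x ^ φ :=
      mul_nonneg (by linarith) (Real.rpow_nonneg hsx.le _)
    have key : ∀ y, ENNReal.ofReal (V y ^ φ) ≤
        ENNReal.ofReal (φ * sf x ^ (φ - 1)) * ENNReal.ofReal (V y)
          + ENNReal.ofReal ((1 - φ) * sf x ^ φ) := by
      intro y
      rw [← ENNReal.ofReal_mul (mul_nonneg hφ0.le (Real.rpow_nonneg hsx.le _))]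
      rw [← ENNReal.ofReal_add (mul_nonneg (mul_nonneg hφ0.le (Real.rpow_nonneg hsx.le _)) (hV0 y).le) hco]
      exact ENNReal.ofReal_le_ofReal
        (by
          have := rpow_tangent' (hV0 y).le hsx hφ0.le hφ1
          linarith)
    calc ∫⁻ y, ENNReal.ofReal (V y ^ φ) ∂(P x)
        ≤ ∫⁻ y, (ENNReal.ofReal (φ * sf x ^ (φ - 1)) * ENNReal.ofReal (V y)
            + ENNReal.ofReal ((1 - φ) * sf x ^ φ)) ∂(P x) := lintegral_mono key
      _ = ENNReal.ofReal (φ * sf x ^ (φ - 1)) * (∫⁻ y, ENNReal.ofReal (V y) ∂(P x))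
            + ENNReal.ofReal ((1 - φ) * sf x ^ φ) := by
          rw [lintegral_add_right _ measurable_const, lintegral_const, measure_univ, mul_one,
            lintegral_const_mul _ hVfm]
      _ ≤ ENNReal.ofReal (φ * sf x ^ (φ - 1)) * ENNReal.ofReal (sf x)
            + ENNReal.ofReal ((1 - φ) * sf x ^ φ) := by
          gcongr
          exact hPE' x
      _ = ENNReal.ofReal (sf x ^ φ) := by
          rw [← ENNReal.ofReal_mul (mul_nonneg hφ0.le (Real.rpow_nonneg hsx.le _)),
            ← ENNReal.ofReal_add (mul_nonneg (mul_nonneg hφ0.le (Real.rpow_nonneg hsx.le _)) hsx.le) hco]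
          congr 1
          have hpow : sf x ^ (φ - 1) * sf x = sf x ^ φ := by
            rw [← Real.rpow_add_one hsx.ne' (φ - 1)]; congr 1; ring
          linear_combination φ * hpow
  -- one-step drift bounds
  have hPV1 : ∀ x, ∫⁻ y, ENNReal.ofReal (V y) ∂(P x)
      ≤ ENNReal.ofReal (V x) + ENNReal.ofReal b := fun x => by
    refine (hPE' x).trans ?_
    rw [← ENNReal.ofReal_add (hV0 x).le hb.le]
    exact ENNReal.ofReal_le_ofReal (hsub x)
  have hPW1 : ∀ x, ∫⁻ y, ENNReal.ofReal (V y ^ (1/2:ℝ)) ∂(P x)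
      ≤ ENNReal.ofReal (V x ^ (1/2:ℝ)) + ENNReal.ofReal (b ^ (1/2:ℝ)) := fun x => by
    refine (hCORE (1/2) (by norm_num) (by norm_num) x).trans ?_
    rw [← ENNReal.ofReal_add (Real.rpow_nonneg (hV0 x).le _) (Real.rpow_nonneg hb.le _)]
    refine ENNReal.ofReal_le_ofReal ?_
    calc sf x ^ (1/2:ℝ) ≤ (V x + b) ^ (1/2:ℝ) :=
          Real.rpow_le_rpow (hs0 x).le (hsub x) (by norm_num)
      _ ≤ V x ^ (1/2:ℝ) + b ^ (1/2:ℝ) :=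
          rpow_addsub (hV0 x).le hb.le (by norm_num) (by norm_num)
  set c₂ : ℝ := θ * c with hc₂def
  have hc₂ : 0 < c₂ := mul_pos hθ0 hc
  have hPU1 : ∀ x, x ∉ C → ∫⁻ y, ENNReal.ofReal (V y ^ θ) ∂(P x)
      ≤ ENNReal.ofReal (V x ^ θ - c₂) := by
    intro x hx
    refine (hCORE θ hθ0 (by rw [hθdef]; linarith) x).trans (ENNReal.ofReal_le_ofReal ?_)
    have hsx : sf x = V x - c * V x ^ α := by
      rw [hsf]; dsimp only; rw [Set.indicator_of_notMem hx, add_zero]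
    set t : ℝ := c * V x ^ (α - 1) with htdef
    have hVt : V x * t = c * V x ^ α := by
      rw [htdef]
      have : V x ^ (α-1) * V x = V x ^ α := by
        rw [← Real.rpow_add_one (hV0 x).ne' (α-1)]; congr 1; ring
      calc V x * (c * V x ^ (α-1)) = c * (V x ^ (α-1) * V x) := by ring
        _ = c * V x ^ α := by rw [this]
    have hst : sf x = V x * (1 - t) := by rw [hsx]; linear_combination hVt
    have ht0 : 0 ≤ t := mul_nonneg hc.le (Real.rpow_nonneg (hV0 x).le _)
    have ht1 : 0 ≤ 1 - t := by
      have h1 := hs1 x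
      rw [hst] at h1
      by_contra h
      push_neg at h
      nlinarith [hV0 x]
    have h1 : sf x ^ θ = V x ^ θ * (1-t) ^ θ := by
      rw [hst, Real.mul_rpow (hV0 x).le ht1]
    have h2 : (1-t) ^ θ ≤ 1 - θ * t := by
      have := rpow_tangent (p := 1 - t) ht1 hθ0.le (by rw [hθdef]; linarith)
      linarith
    have h3 : V x ^ θ * (1-t)^θ ≤ V x ^ θ * (1 - θ*t) :=
      mul_le_mul_of_nonneg_left h2 (Real.rpow_nonneg (hV0 x).le θ)
    have h5 : V x ^ θ * V x ^ (α-1) = 1 := by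
      rw [← Real.rpow_add (hV0 x)]
      have he : θ + (α-1) = 0 := by rw [hθdef]; ring
      rw [he, Real.rpow_zero]
    have h4 : V x ^ θ * (1 - θ*t) = V x ^ θ - c₂ := by
      rw [htdef, hc₂def]
      calc V x ^ θ * (1 - θ*(c * V x ^ (α-1)))
          = V x ^ θ - θ * c * (V x ^ θ * V x ^ (α-1)) := by ring
        _ = V x ^ θ - θ * c := by rw [h5, mul_one]
    rw [h1]
    rw [h4] at h3
    exact h3
  have hUc1 : ∀ x, x ∉ C → 1 ≤ V x ^ θ - c₂ := by
    intro x hx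
    have h1 : (1:ℝ≥0∞) ≤ ∫⁻ y, ENNReal.ofReal (V y ^ θ) ∂(P x) := by
      have he : ∫⁻ _, (1:ℝ≥0∞) ∂(P x) = 1 := by rw [lintegral_one, measure_univ]
      rw [← he]
      exact lintegral_mono fun y => ENNReal.one_le_ofReal.mpr (hU1 y)
    exact ENNReal.one_le_ofReal.mp (h1.trans (hPU1 x hx))
  -- constants
  set D : ℝ := max d 1 with hDdef
  have hD1 : (1:ℝ) ≤ D := le_max_right _ _
  have hD0 : (0:ℝ) < D := lt_of_lt_of_le one_pos hD1
  set β : ℝ := Real.exp (tameBound δ) / 2 with hβdef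
  have htb : tameBound δ = δ⁻¹ * Real.log (1 - δ) := by rw [tameBound, if_neg hδ0.ne']
  have htbneg : tameBound δ < 0 := by
    rw [htb]
    exact mul_neg_of_pos_of_neg (inv_pos.mpr hδ0)
      (Real.log_neg (by rw [hδdef]; linarith) (by rw [hδdef]; linarith))
  have hβ0 : 0 < β := by rw [hβdef]; positivity
  have hβ1 : β < 1 := by
    rw [hβdef]
    have h1 : Real.exp (tameBound δ) < 1 := Real.exp_lt_one_iff.mpr htbneg
    linarith
  have hβlog : Real.log β < tameBound δ := by
    rw [hβdef, Real.log_div (Real.exp_ne_zero _) two_ne_zero, Real.log_exp]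
    have h2 : 0 < Real.log 2 := Real.log_pos (by norm_num)
    linarith
  set lam : ℝ := max (16 / (β^2 * c₂)) 1 with hlamdef
  have hlam1 : (1:ℝ) ≤ lam := le_max_right _ _
  have hlam0 : (0:ℝ) < lam := lt_of_lt_of_le one_pos hlam1
  have hlamk : 16 / (β^2 * c₂) ≤ lam := le_max_left _ _
  set A : ℝ := (D ^ (1/2:ℝ) + (lam+1) * b ^ (1/2:ℝ)) / c₂ with hAdef
  have hA0 : 0 ≤ A := by
    rw [hAdef]
    apply div_nonneg _ hc₂.le
    exact add_nonneg (Real.rpow_nonneg hD0.le _)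
      (mul_nonneg (by linarith) (Real.rpow_nonneg hb.le _))
  -- choice of d'
  have htend : Filter.Tendsto (fun w : ℝ => A * w ^ (2*δ - 1)) Filter.atTop (nhds 0) := by
    have h1 : Filter.Tendsto (fun w : ℝ => w ^ (-(1 - 2*δ))) Filter.atTop (nhds 0) :=
      tendsto_rpow_neg_atTop (by linarith)
    have h2 := h1.const_mul A
    rw [mul_zero] at h2
    have he : (fun w : ℝ => A * w ^ (-(1 - 2*δ))) = (fun w : ℝ => A * w ^ (2*δ - 1)) := by
      funext w; congr 1; congr 1; ring
    rwa [he] at h2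
  have hev : ∀ᶠ w in Filter.atTop, A * w ^ (2*δ-1) < β/4 :=
    htend.eventually_lt_const (by linarith : (0:ℝ) < β/4)
  obtain ⟨d₀, hd₀⟩ := Filter.eventually_atTop.mp hev
  set d' : ℝ := max (max 1 (D ^ (1/2:ℝ))) (max ((lam+1)*b) d₀) with hd'def
  have hd'1 : (1:ℝ) ≤ d' := le_trans (le_max_left _ _) (le_max_left _ _)
  have hd'D : D ^ (1/2:ℝ) ≤ d' := le_trans (le_max_right _ _) (le_max_left _ _)
  have hd'b : (lam+1)*b ≤ d' := le_trans (le_max_left _ _) (le_max_right _ _)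
  have hd'A : ∀ w, d' ≤ w → A * w ^ (2*δ-1) ≤ β/4 := fun w hw =>
    (hd₀ w (le_trans (le_trans (le_max_right _ _) (le_max_right _ _)) hw)).le
  -- the killed kernel
  set K : ProbabilityTheory.Kernel 𝓧 𝓧 := P.restrict hCm.compl with hKdef
  haveI hKfin : IsFiniteKernel K := by rw [hKdef]; infer_instance
  have hKap : ∀ (x : 𝓧) (g : 𝓧 → ℝ≥0∞), ∫⁻ y, g y ∂(K x) = ∫⁻ y in Cᶜ, g y ∂(P x) := by
    intro x g
    rw [hKdef]
    exact Kernel.lintegral_restrict P hCm.compl x g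
  have hKC0 : ∀ z, K z C = 0 := by
    intro z
    rw [hKdef, Kernel.restrict_apply' _ _ _ hCm, Set.inter_compl_self, measure_empty]
  have hsupp : ∀ x, x ∉ C → ∀ n, (kpow K n x) C = 0 := by
    intro x hx n
    cases n with
    | zero =>
        rw [kpow, Kernel.id_apply, Measure.dirac_apply' _ hCm]
        simp [hx]
    | succ n =>
        rw [show kpow K (n+1) = K.comp (kpow K n) from by rw [kpow],
          Kernel.comp_apply' _ _ _ hCm]
        simp only [hKC0, lintegral_zero]
  -- masses
  have hmassmono : ∀ (x : 𝓧) (k : ℕ), (kpow K (k+1) x) Set.univ ≤ (kpow K k x) Set.univ := by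
    intro x k
    rw [show kpow K (k+1) = K.comp (kpow K k) from by rw [kpow],
      Kernel.comp_apply' _ _ _ MeasurableSet.univ]
    calc ∫⁻ z, K z Set.univ ∂(kpow K k x) ≤ ∫⁻ _, 1 ∂(kpow K k x) := by
          apply lintegral_mono
          intro z
          dsimp only
          rw [hKdef, Kernel.restrict_apply' _ _ _ MeasurableSet.univ, Set.univ_inter]
          exact prob_le_one
      _ = (kpow K k x) Set.univ := lintegral_one
  have hmassanti : ∀ (x : 𝓧), ∀ k n : ℕ, k ≤ n →
      (kpow K n x) Set.univ ≤ (kpow K k x) Set.univ := by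
    intro x k n h
    exact antitone_nat_of_succ_le (f := fun k => (kpow K k x) Set.univ) (hmassmono x) h
  -- killed one-step U drift
  have hKU1 : ∀ z, z ∉ C → (∫⁻ y, ENNReal.ofReal (V y ^ θ) ∂(K z)) + ENNReal.ofReal c₂
      ≤ ENNReal.ofReal (V z ^ θ) := by
    intro z hz
    have h1 : (∫⁻ y, ENNReal.ofReal (V y ^ θ) ∂(K z))
        ≤ ∫⁻ y, ENNReal.ofReal (V y ^ θ) ∂(P z) := by
      rw [hKap]; exact setLIntegral_le_lintegral _ _
    have h2 := h1.trans (hPU1 z hz)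
    calc (∫⁻ y, ENNReal.ofReal (V y ^ θ) ∂(K z)) + ENNReal.ofReal c₂
        ≤ ENNReal.ofReal (V z ^ θ - c₂) + ENNReal.ofReal c₂ := add_le_add h2 le_rfl
      _ = ENNReal.ofReal (V z ^ θ) := by
          rw [← ENNReal.ofReal_add (by linarith [hUc1 z hz]) hc₂.le]
          congr 1; ring
  -- telescoping sum
  have htel : ∀ x, x ∉ C → ∀ n : ℕ,
      (∫⁻ y, ENNReal.ofReal (V y ^ θ) ∂(kpow K n x))
        + ENNReal.ofReal c₂ * ∑ k ∈ Finset.range n, (kpow K k x) Set.univ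
      ≤ ENNReal.ofReal (V x ^ θ) := by
    intro x hx n
    induction n with
    | zero =>
        rw [pit_zero K hUfm x]
        simp
    | succ n ih =>
        have hstep : (∫⁻ y, ENNReal.ofReal (V y ^ θ) ∂(kpow K (n+1) x))
            + ENNReal.ofReal c₂ * (kpow K n x) Set.univ
            ≤ ∫⁻ y, ENNReal.ofReal (V y ^ θ) ∂(kpow K n x) := by
          rw [pit_succ_right K hUfm n x]
          have e1 : ENNReal.ofReal c₂ * (kpow K n x) Set.univ
              = ∫⁻ _, ENNReal.ofReal c₂ ∂(kpow K n x) := by rw [lintegral_const]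
          rw [e1, ← lintegral_add_right _ measurable_const]
          apply lintegral_mono_ae
          have hae : ∀ᵐ z ∂(kpow K n x), z ∉ C := by
            rw [MeasureTheory.ae_iff]
            have he : {z | ¬ z ∉ C} = C := by ext z; simp
            rw [he]
            exact hsupp x hx n
          filter_upwards [hae] with z hz
          exact hKU1 z hz
        rw [Finset.sum_range_succ, mul_add]
        calc (∫⁻ y, ENNReal.ofReal (V y ^ θ) ∂(kpow K (n+1) x))
              + (ENNReal.ofReal c₂ * ∑ k ∈ Finset.range n, (kpow K k x) Set.univ
                + ENNReal.ofReal c₂ * (kpow K n x) Set.univ)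
            = ((∫⁻ y, ENNReal.ofReal (V y ^ θ) ∂(kpow K (n+1) x))
                + ENNReal.ofReal c₂ * (kpow K n x) Set.univ)
              + ENNReal.ofReal c₂ * ∑ k ∈ Finset.range n, (kpow K k x) Set.univ := by ring
          _ ≤ (∫⁻ y, ENNReal.ofReal (V y ^ θ) ∂(kpow K n x))
              + ENNReal.ofReal c₂ * ∑ k ∈ Finset.range n, (kpow K k x) Set.univ :=
              add_le_add hstep le_rfl
          _ ≤ ENNReal.ofReal (V x ^ θ) := ih
  have hmassn : ∀ x, x ∉ C → ∀ n : ℕ,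
      (n : ℝ≥0∞) * (ENNReal.ofReal c₂ * (kpow K n x) Set.univ)
        ≤ ENNReal.ofReal (V x ^ θ) := by
    intro x hx n
    have h1 : (n:ℝ≥0∞) * (kpow K n x) Set.univ
        ≤ ∑ k ∈ Finset.range n, (kpow K k x) Set.univ := by
      have h := Finset.card_nsmul_le_sum (Finset.range n) (fun k => (kpow K k x) Set.univ)
        ((kpow K n x) Set.univ) (fun k hk => hmassanti x k n (Finset.mem_range.mp hk).le)
      rwa [Finset.card_range, nsmul_eq_mul] at h
    calc (n:ℝ≥0∞) * (ENNReal.ofReal c₂ * (kpow K n x) Set.univ)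
        = ENNReal.ofReal c₂ * ((n:ℝ≥0∞) * (kpow K n x) Set.univ) := by ring
      _ ≤ ENNReal.ofReal c₂ * ∑ k ∈ Finset.range n, (kpow K k x) Set.univ :=
          mul_le_mul_right h1 _
      _ ≤ ENNReal.ofReal (V x ^ θ) := le_trans le_add_self (htel x hx n)
  -- iterates of P
  have hPVn : ∀ n : ℕ, ∀ x, ∫⁻ y, ENNReal.ofReal (V y) ∂(kpow P n x)
      ≤ ENNReal.ofReal (V x) + (n:ℝ≥0∞) * ENNReal.ofReal b := by
    intro n
    induction n with
    | zero => intro x; rw [pit_zero P hVfm x]; simp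
    | succ n ih =>
        intro x
        rw [pit_succ P hVfm n x]
        calc ∫⁻ z, (∫⁻ y, ENNReal.ofReal (V y) ∂(kpow P n z)) ∂(P x)
            ≤ ∫⁻ z, (ENNReal.ofReal (V z) + (n:ℝ≥0∞) * ENNReal.ofReal b) ∂(P x) :=
              lintegral_mono fun z => ih z
          _ = (∫⁻ z, ENNReal.ofReal (V z) ∂(P x)) + (n:ℝ≥0∞) * ENNReal.ofReal b := by
              rw [lintegral_add_right _ measurable_const, lintegral_const, measure_univ, mul_one]
          _ ≤ (ENNReal.ofReal (V x) + ENNReal.ofReal b) + (n:ℝ≥0∞) * ENNReal.ofReal b :=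
              add_le_add (hPV1 x) le_rfl
          _ = ENNReal.ofReal (V x) + ((n:ℕ)+1 : ℝ≥0∞) * ENNReal.ofReal b := by ring
          _ = ENNReal.ofReal (V x) + ((n+1 : ℕ) : ℝ≥0∞) * ENNReal.ofReal b := by push_cast; ring
  have hPWn : ∀ n : ℕ, ∀ x, ∫⁻ y, ENNReal.ofReal (V y ^ (1/2:ℝ)) ∂(kpow P n x)
      ≤ ENNReal.ofReal (V x ^ (1/2:ℝ)) + (n:ℝ≥0∞) * ENNReal.ofReal (b ^ (1/2:ℝ)) := by
    intro n
    induction n with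
    | zero => intro x; rw [pit_zero P hWfm x]; simp
    | succ n ih =>
        intro x
        rw [pit_succ P hWfm n x]
        calc ∫⁻ z, (∫⁻ y, ENNReal.ofReal (V y ^ (1/2:ℝ)) ∂(kpow P n z)) ∂(P x)
            ≤ ∫⁻ z, (ENNReal.ofReal (V z ^ (1/2:ℝ))
                + (n:ℝ≥0∞) * ENNReal.ofReal (b ^ (1/2:ℝ))) ∂(P x) :=
              lintegral_mono fun z => ih z
          _ = (∫⁻ z, ENNReal.ofReal (V z ^ (1/2:ℝ)) ∂(P x))
                + (n:ℝ≥0∞) * ENNReal.ofReal (b ^ (1/2:ℝ)) := by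
              rw [lintegral_add_right _ measurable_const, lintegral_const, measure_univ, mul_one]
          _ ≤ (ENNReal.ofReal (V x ^ (1/2:ℝ)) + ENNReal.ofReal (b ^ (1/2:ℝ)))
                + (n:ℝ≥0∞) * ENNReal.ofReal (b ^ (1/2:ℝ)) := add_le_add (hPW1 x) le_rfl
          _ = ENNReal.ofReal (V x ^ (1/2:ℝ)) + ((n:ℕ)+1 : ℝ≥0∞) * ENNReal.ofReal (b ^ (1/2:ℝ)) := by
              ring
          _ = ENNReal.ofReal (V x ^ (1/2:ℝ))
                + ((n+1 : ℕ) : ℝ≥0∞) * ENNReal.ofReal (b ^ (1/2:ℝ)) := by push_cast; ring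
  -- killed ≤ full
  have hKP : ∀ (g : 𝓧 → ℝ≥0∞), Measurable g → ∀ n : ℕ, ∀ x,
      ∫⁻ y, g y ∂(kpow K n x) ≤ ∫⁻ y, g y ∂(kpow P n x) := by
    intro g hg n
    induction n with
    | zero => intro x; rw [pit_zero K hg, pit_zero P hg]
    | succ n ih =>
        intro x
        rw [pit_succ K hg n x, pit_succ P hg n x]
        calc ∫⁻ z, (∫⁻ y, g y ∂(kpow K n z)) ∂(K x)
            ≤ ∫⁻ z, (∫⁻ y, g y ∂(kpow P n z)) ∂(K x) := lintegral_mono fun z => ih z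
          _ = ∫⁻ z in Cᶜ, (∫⁻ y, g y ∂(kpow P n z)) ∂(P x) := hKap x _
          _ ≤ ∫⁻ z, (∫⁻ y, g y ∂(kpow P n z)) ∂(P x) := setLIntegral_le_lintegral _ _
  -- measurability of iterated objects
  have hPPm : ∀ j : ℕ, Measurable (fun y => ∫⁻ w, ENNReal.ofReal (V w ^ (1/2:ℝ)) ∂(kpow P j y)) :=
    fun j => pit_meas P hWfm j
  have hJm : ∀ j : ℕ, Measurable (fun z => ∫⁻ y in C,
      (∫⁻ w, ENNReal.ofReal (V w ^ (1/2:ℝ)) ∂(kpow P j y)) ∂(P z)) := by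
    intro j
    exact Measurable.setLIntegral_kernel_prod_right (κ := P)
      (f := fun _ y => ∫⁻ w, ENNReal.ofReal (V w ^ (1/2:ℝ)) ∂(kpow P j y))
      (by exact (hPPm j).comp measurable_snd) hCm
  have hKJm : ∀ (k j : ℕ), Measurable (fun x => ∫⁻ z, (∫⁻ y in C,
      (∫⁻ w, ENNReal.ofReal (V w ^ (1/2:ℝ)) ∂(kpow P j y)) ∂(P z)) ∂(kpow K k x)) :=
    fun k j => pit_meas K (hJm j) k
  -- first-entrance decomposition
  have hdec : ∀ n : ℕ, ∀ x,
      ∫⁻ y, ENNReal.ofReal (V y ^ (1/2:ℝ)) ∂(kpow P n x)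
      ≤ (∫⁻ y, ENNReal.ofReal (V y ^ (1/2:ℝ)) ∂(kpow K n x))
        + ∑ k ∈ Finset.range n, ∫⁻ z, (∫⁻ y in C,
            (∫⁻ w, ENNReal.ofReal (V w ^ (1/2:ℝ)) ∂(kpow P (n - (k+1)) y)) ∂(P z))
          ∂(kpow K k x) := by
    intro n
    induction n with
    | zero =>
        intro x
        simp only [Finset.range_zero, Finset.sum_empty, add_zero]
        rw [pit_zero P hWfm x, pit_zero K hWfm x]
    | succ n ih =>
        intro x
        rw [pit_succ P hWfm n x]
        have hsplitC : ∫⁻ z, (∫⁻ y, ENNReal.ofReal (V y ^ (1/2:ℝ)) ∂(kpow P n z)) ∂(P x)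
            = (∫⁻ z in Cᶜ, (∫⁻ y, ENNReal.ofReal (V y ^ (1/2:ℝ)) ∂(kpow P n z)) ∂(P x))
              + (∫⁻ z in C, (∫⁻ y, ENNReal.ofReal (V y ^ (1/2:ℝ)) ∂(kpow P n z)) ∂(P x)) := by
          rw [← lintegral_add_compl (fun z => ∫⁻ y,
            ENNReal.ofReal (V y ^ (1/2:ℝ)) ∂(kpow P n z)) hCm]
          ring
        rw [hsplitC]
        -- bound the Cᶜ part
        have hCc : (∫⁻ z in Cᶜ, (∫⁻ y, ENNReal.ofReal (V y ^ (1/2:ℝ)) ∂(kpow P n z)) ∂(P x))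
            ≤ (∫⁻ y, ENNReal.ofReal (V y ^ (1/2:ℝ)) ∂(kpow K (n+1) x))
              + ∑ k ∈ Finset.range n, ∫⁻ z, (∫⁻ y in C,
                  (∫⁻ w, ENNReal.ofReal (V w ^ (1/2:ℝ)) ∂(kpow P (n - (k+1)) y)) ∂(P z))
                ∂(kpow K (k+1) x) := by
          rw [← hKap x]
          calc ∫⁻ z, (∫⁻ y, ENNReal.ofReal (V y ^ (1/2:ℝ)) ∂(kpow P n z)) ∂(K x)
              ≤ ∫⁻ z, ((∫⁻ y, ENNReal.ofReal (V y ^ (1/2:ℝ)) ∂(kpow K n z))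
                  + ∑ k ∈ Finset.range n, ∫⁻ z', (∫⁻ y in C,
                      (∫⁻ w, ENNReal.ofReal (V w ^ (1/2:ℝ)) ∂(kpow P (n - (k+1)) y)) ∂(P z'))
                    ∂(kpow K k z)) ∂(K x) := lintegral_mono fun z => ih z
            _ = (∫⁻ z, (∫⁻ y, ENNReal.ofReal (V y ^ (1/2:ℝ)) ∂(kpow K n z)) ∂(K x))
                  + ∫⁻ z, (∑ k ∈ Finset.range n, ∫⁻ z', (∫⁻ y in C,
                      (∫⁻ w, ENNReal.ofReal (V w ^ (1/2:ℝ)) ∂(kpow P (n - (k+1)) y)) ∂(P z'))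
                    ∂(kpow K k z)) ∂(K x) :=
                lintegral_add_left (pit_meas K hWfm n) _
            _ = (∫⁻ y, ENNReal.ofReal (V y ^ (1/2:ℝ)) ∂(kpow K (n+1) x))
                  + ∑ k ∈ Finset.range n, ∫⁻ z, (∫⁻ z', (∫⁻ y in C,
                      (∫⁻ w, ENNReal.ofReal (V w ^ (1/2:ℝ)) ∂(kpow P (n - (k+1)) y)) ∂(P z'))
                    ∂(kpow K k z)) ∂(K x) := by
                rw [← pit_succ K hWfm n x,
                  lintegral_finset_sum _ (fun k _ => hKJm k (n - (k+1)))]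
            _ = (∫⁻ y, ENNReal.ofReal (V y ^ (1/2:ℝ)) ∂(kpow K (n+1) x))
                  + ∑ k ∈ Finset.range n, ∫⁻ z, (∫⁻ y in C,
                      (∫⁻ w, ENNReal.ofReal (V w ^ (1/2:ℝ)) ∂(kpow P (n - (k+1)) y)) ∂(P z))
                    ∂(kpow K (k+1) x) := by
                congr 1
                apply Finset.sum_congr rfl
                intro k _
                rw [← pit_succ K (hJm (n - (k+1))) k x]
        -- reassemble
        have hCpart : (∫⁻ z in C, (∫⁻ y, ENNReal.ofReal (V y ^ (1/2:ℝ)) ∂(kpow P n z)) ∂(P x))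
            = ∫⁻ z, (∫⁻ y in C,
                (∫⁻ w, ENNReal.ofReal (V w ^ (1/2:ℝ)) ∂(kpow P n y)) ∂(P z))
              ∂(kpow K 0 x) := by
          rw [pit_zero K (hJm n) x]
        calc (∫⁻ z in Cᶜ, (∫⁻ y, ENNReal.ofReal (V y ^ (1/2:ℝ)) ∂(kpow P n z)) ∂(P x))
              + (∫⁻ z in C, (∫⁻ y, ENNReal.ofReal (V y ^ (1/2:ℝ)) ∂(kpow P n z)) ∂(P x))
            ≤ ((∫⁻ y, ENNReal.ofReal (V y ^ (1/2:ℝ)) ∂(kpow K (n+1) x))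
              + ∑ k ∈ Finset.range n, ∫⁻ z, (∫⁻ y in C,
                  (∫⁻ w, ENNReal.ofReal (V w ^ (1/2:ℝ)) ∂(kpow P (n - (k+1)) y)) ∂(P z))
                ∂(kpow K (k+1) x))
              + ∫⁻ z, (∫⁻ y in C,
                  (∫⁻ w, ENNReal.ofReal (V w ^ (1/2:ℝ)) ∂(kpow P n y)) ∂(P z))
                ∂(kpow K 0 x) := by
              rw [← hCpart]
              exact add_le_add hCc le_rfl
          _ = (∫⁻ y, ENNReal.ofReal (V y ^ (1/2:ℝ)) ∂(kpow K (n+1) x))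
              + ∑ k ∈ Finset.range (n+1), ∫⁻ z, (∫⁻ y in C,
                  (∫⁻ w, ENNReal.ofReal (V w ^ (1/2:ℝ)) ∂(kpow P ((n+1) - (k+1)) y)) ∂(P z))
                ∂(kpow K k x) := by
              rw [Finset.sum_range_succ']
              have he1 : ∀ k : ℕ, (n+1) - (k+1+1) = n - (k+1) := fun k => by omega
              have he2 : (n+1) - (0+1) = n := by omega
              rw [he2]
              have he3 : ∀ k ∈ Finset.range n,
                  (∫⁻ z, (∫⁻ y in C, (∫⁻ w, ENNReal.ofReal (V w ^ (1/2:ℝ))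
                      ∂(kpow P ((n+1) - (k+1+1)) y)) ∂(P z)) ∂(kpow K (k+1) x))
                  = ∫⁻ z, (∫⁻ y in C, (∫⁻ w, ENNReal.ofReal (V w ^ (1/2:ℝ))
                      ∂(kpow P (n - (k+1)) y)) ∂(P z)) ∂(kpow K (k+1) x) := by
                intro k _
                rw [he1 k]
              rw [Finset.sum_congr rfl he3]
              ring
  -- bound on re-entry terms
  have hVleD : ∀ y, y ∈ C → V y ≤ D := by
    intro y hy
    rw [hCdef] at hy
    exact le_trans hy (le_max_left d 1)
  have hJb : ∀ (nN j : ℕ), j ≤ nN → ∀ z,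
      (∫⁻ y in C, (∫⁻ w, ENNReal.ofReal (V w ^ (1/2:ℝ)) ∂(kpow P j y)) ∂(P z))
        ≤ ENNReal.ofReal (D ^ (1/2:ℝ) + (nN:ℝ) * b ^ (1/2:ℝ)) := by
    intro nN j hj z
    have hMnn : (0:ℝ) ≤ (nN:ℝ) * b ^ (1/2:ℝ) :=
      mul_nonneg (Nat.cast_nonneg nN) (Real.rpow_nonneg hb.le _)
    have hpt : ∀ y ∈ C, (∫⁻ w, ENNReal.ofReal (V w ^ (1/2:ℝ)) ∂(kpow P j y))
        ≤ ENNReal.ofReal (D ^ (1/2:ℝ) + (nN:ℝ) * b ^ (1/2:ℝ)) := by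
      intro y hy
      calc ∫⁻ w, ENNReal.ofReal (V w ^ (1/2:ℝ)) ∂(kpow P j y)
          ≤ ENNReal.ofReal (V y ^ (1/2:ℝ)) + (j:ℝ≥0∞) * ENNReal.ofReal (b ^ (1/2:ℝ)) :=
            hPWn j y
        _ ≤ ENNReal.ofReal (D ^ (1/2:ℝ)) + ENNReal.ofReal ((nN:ℝ) * b ^ (1/2:ℝ)) := by
            apply add_le_add
            · exact ENNReal.ofReal_le_ofReal
                (Real.rpow_le_rpow (hV0 y).le (hVleD y hy) (by norm_num))
            · rw [show ((j:ℝ≥0∞)) = ENNReal.ofReal (j:ℝ) from (ENNReal.ofReal_natCast j).symm,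
                ← ENNReal.ofReal_mul (Nat.cast_nonneg j)]
              apply ENNReal.ofReal_le_ofReal
              apply mul_le_mul_of_nonneg_right _ (Real.rpow_nonneg hb.le _)
              exact_mod_cast hj
        _ = ENNReal.ofReal (D ^ (1/2:ℝ) + (nN:ℝ) * b ^ (1/2:ℝ)) :=
            (ENNReal.ofReal_add (Real.rpow_nonneg hD0.le _) hMnn).symm
    calc (∫⁻ y in C, (∫⁻ w, ENNReal.ofReal (V w ^ (1/2:ℝ)) ∂(kpow P j y)) ∂(P z))
        ≤ ∫⁻ _ in C, ENNReal.ofReal (D ^ (1/2:ℝ) + (nN:ℝ) * b ^ (1/2:ℝ)) ∂(P z) :=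
          setLIntegral_mono measurable_const hpt
      _ = ENNReal.ofReal (D ^ (1/2:ℝ) + (nN:ℝ) * b ^ (1/2:ℝ)) * (P z) C :=
          setLIntegral_const _ _
      _ ≤ ENNReal.ofReal (D ^ (1/2:ℝ) + (nN:ℝ) * b ^ (1/2:ℝ)) * 1 :=
          mul_le_mul_right prob_le_one _
      _ = ENNReal.ofReal (D ^ (1/2:ℝ) + (nN:ℝ) * b ^ (1/2:ℝ)) := mul_one _
  -- tail split of the killed term
  have hKtail : ∀ (n : ℕ) (x : 𝓧) (a : ℝ), 0 < a →
      ∫⁻ y, ENNReal.ofReal (V y ^ (1/2:ℝ)) ∂(kpow K n x)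
        ≤ ENNReal.ofReal a * (kpow K n x) Set.univ
          + ENNReal.ofReal (1/a) * ∫⁻ y, ENNReal.ofReal (V y) ∂(kpow K n x) := by
    intro n x a ha
    have hpt : ∀ y, ENNReal.ofReal (V y ^ (1/2:ℝ))
        ≤ ENNReal.ofReal a + ENNReal.ofReal (1/a) * ENNReal.ofReal (V y) := by
      intro y
      rw [← ENNReal.ofReal_mul (one_div_nonneg.mpr ha.le),
        ← ENNReal.ofReal_add ha.le (mul_nonneg (one_div_nonneg.mpr ha.le) (hV0 y).le)]
      apply ENNReal.ofReal_le_ofReal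
      have h := rpow_half_le_add_div (hV0 y).le ha
      calc V y ^ (1/2:ℝ) ≤ a + V y / a := h
        _ = a + 1/a * V y := by ring
    calc ∫⁻ y, ENNReal.ofReal (V y ^ (1/2:ℝ)) ∂(kpow K n x)
        ≤ ∫⁻ y, (ENNReal.ofReal a + ENNReal.ofReal (1/a) * ENNReal.ofReal (V y))
            ∂(kpow K n x) := lintegral_mono hpt
      _ = ENNReal.ofReal a * (kpow K n x) Set.univ
          + ENNReal.ofReal (1/a) * ∫⁻ y, ENNReal.ofReal (V y) ∂(kpow K n x) := by
          rw [lintegral_add_left measurable_const, lintegral_const,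
            lintegral_const_mul _ hVfm]
  -- produce the tameness witness
  refine ⟨d', hd'1, ?_, lam, hlam0, δ, ⟨hδ0.le, by linarith⟩, β, ⟨hβ0, hβ1⟩,
    d' + b ^ (1/2:ℝ), hβlog, ?_⟩
  · -- smallness of the sublevel set
    have hset : {x | (fun x => V x ^ (1/2:ℝ)) x ≤ d'} = {x | V x ≤ d' * d'} := by
      ext x
      simp only [Set.mem_setOf_eq]
      constructor
      · intro h
        have h2 : V x ^ (1/2:ℝ) * V x ^ (1/2:ℝ) ≤ d' * d' :=
          mul_le_mul h h (Real.rpow_nonneg (hV0 x).le _) (by linarith)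
        rwa [hWsq x] at h2
      · intro h
        have h2 : V x ^ (1/2:ℝ) ≤ (d'*d') ^ (1/2:ℝ) :=
          Real.rpow_le_rpow (hV0 x).le h (by norm_num)
        have h3 : (d'*d') ^ (1/2:ℝ) = d' := by
          rw [Real.mul_rpow (by linarith) (by linarith),
            ← Real.rpow_add (by linarith : (0:ℝ) < d')]
          norm_num
        rw [h3] at h2
        exact h2
    rw [hset]
    exact hsmall (d' * d')
  · intro x
    dsimp only
    by_cases hx : V x ^ (1/2:ℝ) ≤ d'
    · -- inside the small set: one step
      rw [show tamingF lam δ d' (V x ^ (1/2:ℝ)) = 1 from if_pos hx]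
      rw [show kpow P 1 = P from by rw [kpow, kpow, Kernel.comp_id]]
      refine (hPW1 x).trans ?_
      rw [Set.indicator_of_mem (by exact hx : x ∈ {x' | V x' ^ (1/2:ℝ) ≤ d'})]
      rw [← ENNReal.ofReal_add (Real.rpow_nonneg (hV0 x).le _) (Real.rpow_nonneg hb.le _)]
      apply ENNReal.ofReal_le_ofReal
      have hβW : 0 ≤ β * V x ^ (1/2:ℝ) := mul_nonneg hβ0.le (Real.rpow_nonneg (hV0 x).le _)
      linarith
    · -- outside: subsampled contraction
      push_neg at hx
      rw [Set.indicator_of_notMem (by simpa using not_le.mpr hx), add_zero]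
      have hw1 : (1:ℝ) ≤ V x ^ (1/2:ℝ) := hW1 x
      have hw0 : (0:ℝ) < V x ^ (1/2:ℝ) := lt_of_lt_of_le one_pos hw1
      have hxC : x ∉ C := by
        intro hxc
        have h1 : V x ≤ D := hVleD x hxc
        have h2 : V x ^ (1/2:ℝ) ≤ D ^ (1/2:ℝ) :=
          Real.rpow_le_rpow (hV0 x).le h1 (by norm_num)
        linarith [hd'D]
      rw [show tamingF lam δ d' (V x ^ (1/2:ℝ)) = ⌈lam * (V x ^ (1/2:ℝ)) ^ δ⌉₊
        from if_neg (not_le.mpr hx)]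
      set nn : ℕ := ⌈lam * (V x ^ (1/2:ℝ)) ^ δ⌉₊ with hnn
      have hwδ : (V x ^ (1/2:ℝ)) ^ δ = V x ^ θ := hWδ x
      have hpos : (0:ℝ) < lam * (V x ^ (1/2:ℝ)) ^ δ := by
        apply mul_pos hlam0
        rw [hwδ]
        linarith [hU1 x]
      have hN1' : 1 ≤ nn := by
        rw [hnn]
        exact Nat.one_le_iff_ne_zero.mpr (Nat.ceil_pos.mpr hpos).ne'
      have hNpos : (0:ℝ) < (nn:ℝ) := by exact_mod_cast Nat.lt_of_lt_of_le Nat.zero_lt_one hN1'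
      have hNlow : lam * V x ^ θ ≤ (nn:ℝ) := by
        rw [hnn, ← hwδ]
        exact Nat.le_ceil _
      have hNup : (nn:ℝ) ≤ lam * V x ^ θ + 1 := by
        rw [hnn, ← hwδ]
        exact (Nat.ceil_lt_add_one hpos.le).le
      set a : ℝ := 4 * V x ^ (1/2:ℝ) / β with hadef
      have ha0 : 0 < a := by
        rw [hadef]
        exact div_pos (by linarith) hβ0
      have hNc0 : (0:ℝ) < (nn:ℝ) * c₂ := mul_pos hNpos hc₂
      -- mass bounds
      have hm1 : (kpow K nn x) Set.univ ≤ ENNReal.ofReal (V x ^ θ / ((nn:ℝ) * c₂)) := by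
        have h := hmassn x hxC nn
        rw [← mul_assoc, show ((nn:ℝ≥0∞)) * ENNReal.ofReal c₂
          = ENNReal.ofReal ((nn:ℝ) * c₂) from by
            rw [← ENNReal.ofReal_natCast nn, ← ENNReal.ofReal_mul (Nat.cast_nonneg nn)]] at h
        rw [ENNReal.ofReal_div_of_pos hNc0]
        rw [ENNReal.le_div_iff_mul_le (Or.inl (ENNReal.ofReal_pos.mpr hNc0).ne')
          (Or.inl ENNReal.ofReal_ne_top)]
        rwa [mul_comm]
      have hm2 : ∑ k ∈ Finset.range nn, (kpow K k x) Set.univ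
          ≤ ENNReal.ofReal (V x ^ θ / c₂) := by
        have h : ENNReal.ofReal c₂ * ∑ k ∈ Finset.range nn, (kpow K k x) Set.univ
            ≤ ENNReal.ofReal (V x ^ θ) := le_trans le_add_self (htel x hxC nn)
        rw [ENNReal.ofReal_div_of_pos hc₂]
        rw [ENNReal.le_div_iff_mul_le (Or.inl (ENNReal.ofReal_pos.mpr hc₂).ne')
          (Or.inl ENNReal.ofReal_ne_top)]
        rwa [mul_comm]
      -- killed part bound
      have hKWn : ∫⁻ y, ENNReal.ofReal (V y ^ (1/2:ℝ)) ∂(kpow K nn x)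
          ≤ ENNReal.ofReal (a * (V x ^ θ / ((nn:ℝ) * c₂)))
            + ENNReal.ofReal ((1/a) * (V x + (nn:ℝ) * b)) := by
        refine (hKtail nn x a ha0).trans ?_
        apply add_le_add
        · calc ENNReal.ofReal a * (kpow K nn x) Set.univ
              ≤ ENNReal.ofReal a * ENNReal.ofReal (V x ^ θ / ((nn:ℝ) * c₂)) :=
                mul_le_mul_right hm1 _
            _ = ENNReal.ofReal (a * (V x ^ θ / ((nn:ℝ) * c₂))) :=
                (ENNReal.ofReal_mul ha0.le).symm
        · calc ENNReal.ofReal (1/a) * ∫⁻ y, ENNReal.ofReal (V y) ∂(kpow K nn x)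
              ≤ ENNReal.ofReal (1/a) * ∫⁻ y, ENNReal.ofReal (V y) ∂(kpow P nn x) :=
                mul_le_mul_right (hKP _ hVfm nn x) _
            _ ≤ ENNReal.ofReal (1/a) * (ENNReal.ofReal (V x) + (nn:ℝ≥0∞) * ENNReal.ofReal b) :=
                mul_le_mul_right (hPVn nn x) _
            _ = ENNReal.ofReal ((1/a) * (V x + (nn:ℝ) * b)) := by
                rw [show ((nn:ℝ≥0∞)) = ENNReal.ofReal (nn:ℝ) from (ENNReal.ofReal_natCast nn).symm,
                  ← ENNReal.ofReal_mul (Nat.cast_nonneg nn),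
                  ← ENNReal.ofReal_add (hV0 x).le (mul_nonneg (Nat.cast_nonneg nn) hb.le),
                  ← ENNReal.ofReal_mul (one_div_nonneg.mpr ha0.le)]
      -- re-entry sum bound
      have hMpos : (0:ℝ) ≤ D ^ (1/2:ℝ) + (nn:ℝ) * b ^ (1/2:ℝ) :=
        add_nonneg (Real.rpow_nonneg hD0.le _)
          (mul_nonneg (Nat.cast_nonneg nn) (Real.rpow_nonneg hb.le _))
      have hSum : ∑ k ∈ Finset.range nn, (∫⁻ z, (∫⁻ y in C,
            (∫⁻ w, ENNReal.ofReal (V w ^ (1/2:ℝ)) ∂(kpow P (nn - (k+1)) y)) ∂(P z))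
          ∂(kpow K k x))
          ≤ ENNReal.ofReal ((D ^ (1/2:ℝ) + (nn:ℝ) * b ^ (1/2:ℝ)) * (V x ^ θ / c₂)) := by
        calc ∑ k ∈ Finset.range nn, (∫⁻ z, (∫⁻ y in C,
              (∫⁻ w, ENNReal.ofReal (V w ^ (1/2:ℝ)) ∂(kpow P (nn - (k+1)) y)) ∂(P z))
            ∂(kpow K k x))
            ≤ ∑ k ∈ Finset.range nn,
                ENNReal.ofReal (D ^ (1/2:ℝ) + (nn:ℝ) * b ^ (1/2:ℝ)) * (kpow K k x) Set.univ := by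
              apply Finset.sum_le_sum
              intro k _
              calc ∫⁻ z, (∫⁻ y in C,
                    (∫⁻ w, ENNReal.ofReal (V w ^ (1/2:ℝ)) ∂(kpow P (nn - (k+1)) y)) ∂(P z))
                  ∂(kpow K k x)
                  ≤ ∫⁻ _, ENNReal.ofReal (D ^ (1/2:ℝ) + (nn:ℝ) * b ^ (1/2:ℝ)) ∂(kpow K k x) :=
                    lintegral_mono fun z => hJb nn (nn - (k+1)) (Nat.sub_le _ _) z
                _ = ENNReal.ofReal (D ^ (1/2:ℝ) + (nn:ℝ) * b ^ (1/2:ℝ)) * (kpow K k x) Set.univ :=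
                    lintegral_const _
          _ = ENNReal.ofReal (D ^ (1/2:ℝ) + (nn:ℝ) * b ^ (1/2:ℝ))
                * ∑ k ∈ Finset.range nn, (kpow K k x) Set.univ := by
              rw [Finset.mul_sum]
          _ ≤ ENNReal.ofReal (D ^ (1/2:ℝ) + (nn:ℝ) * b ^ (1/2:ℝ))
                * ENNReal.ofReal (V x ^ θ / c₂) := mul_le_mul_right hm2 _
          _ = ENNReal.ofReal ((D ^ (1/2:ℝ) + (nn:ℝ) * b ^ (1/2:ℝ)) * (V x ^ θ / c₂)) :=
              (ENNReal.ofReal_mul hMpos).symm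
      -- total bound
      have htot : ∫⁻ y, ENNReal.ofReal (V y ^ (1/2:ℝ)) ∂(kpow P nn x)
          ≤ ENNReal.ofReal (a * (V x ^ θ / ((nn:ℝ) * c₂))
              + (1/a) * (V x + (nn:ℝ) * b)
              + (D ^ (1/2:ℝ) + (nn:ℝ) * b ^ (1/2:ℝ)) * (V x ^ θ / c₂)) := by
        refine (hdec nn x).trans ?_
        have ta : (0:ℝ) ≤ a * (V x ^ θ / ((nn:ℝ) * c₂)) :=
          mul_nonneg ha0.le (div_nonneg (Real.rpow_nonneg (hV0 x).le _) hNc0.le)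
        have tb : (0:ℝ) ≤ (1/a) * (V x + (nn:ℝ) * b) :=
          mul_nonneg (one_div_nonneg.mpr ha0.le)
            (add_nonneg (hV0 x).le (mul_nonneg (Nat.cast_nonneg nn) hb.le))
        have tc : (0:ℝ) ≤ (D ^ (1/2:ℝ) + (nn:ℝ) * b ^ (1/2:ℝ)) * (V x ^ θ / c₂) :=
          mul_nonneg hMpos (div_nonneg (Real.rpow_nonneg (hV0 x).le _) hc₂.le)
        calc (∫⁻ y, ENNReal.ofReal (V y ^ (1/2:ℝ)) ∂(kpow K nn x))
              + ∑ k ∈ Finset.range nn, (∫⁻ z, (∫⁻ y in C,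
                  (∫⁻ w, ENNReal.ofReal (V w ^ (1/2:ℝ)) ∂(kpow P (nn - (k+1)) y)) ∂(P z))
                ∂(kpow K k x))
            ≤ (ENNReal.ofReal (a * (V x ^ θ / ((nn:ℝ) * c₂)))
                + ENNReal.ofReal ((1/a) * (V x + (nn:ℝ) * b)))
              + ENNReal.ofReal ((D ^ (1/2:ℝ) + (nn:ℝ) * b ^ (1/2:ℝ)) * (V x ^ θ / c₂)) :=
              add_le_add hKWn hSum
          _ = ENNReal.ofReal (a * (V x ^ θ / ((nn:ℝ) * c₂))
              + (1/a) * (V x + (nn:ℝ) * b)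
              + (D ^ (1/2:ℝ) + (nn:ℝ) * b ^ (1/2:ℝ)) * (V x ^ θ / c₂)) := by
              rw [← ENNReal.ofReal_add ta tb, ← ENNReal.ofReal_add (add_nonneg ta tb) tc]
      refine htot.trans (ENNReal.ofReal_le_ofReal ?_)
      -- the real-variable inequality
      have hu1' : 1 ≤ V x ^ θ := hU1 x
      have huw : V x ^ θ ≤ V x ^ (1/2:ℝ) := hUW x
      have hAu : ((D ^ (1/2:ℝ) + (lam+1) * b ^ (1/2:ℝ))/c₂) * (V x ^ θ * V x ^ θ)
          ≤ (β/4) * V x ^ (1/2:ℝ) := by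
        have h1 : V x ^ θ * V x ^ θ = (V x ^ (1/2:ℝ)) ^ (2*δ - 1) * V x ^ (1/2:ℝ) := by
          rw [← hwδ, ← Real.rpow_add hw0, ← Real.rpow_add_one hw0.ne' (2*δ-1)]
          congr 1
          ring
        rw [h1, ← mul_assoc]
        have h3 : ((D ^ (1/2:ℝ) + (lam+1) * b ^ (1/2:ℝ))/c₂) * (V x ^ (1/2:ℝ)) ^ (2*δ-1)
            ≤ β/4 := by
          rw [← hAdef]
          exact hd'A _ hx.le
        exact mul_le_mul_of_nonneg_right h3 hw0.le
      have hfin := final_real c₂ β lam d' (D ^ (1/2:ℝ)) (b ^ (1/2:ℝ)) b (V x ^ θ)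
        (V x ^ (1/2:ℝ)) (nn:ℝ) hc₂ hβ0 hβ1 hlamk hlam1 hd'1 hx.le hd'b hb
        (Real.rpow_nonneg hD0.le _) (Real.rpow_nonneg hb.le _) hu1' huw hAu
        (by exact_mod_cast hN1') hNlow hNup
      have hVw : V x = V x ^ (1/2:ℝ) * V x ^ (1/2:ℝ) := (hWsq x).symm
      calc a * (V x ^ θ / ((nn:ℝ) * c₂)) + (1/a) * (V x + (nn:ℝ) * b)
            + (D ^ (1/2:ℝ) + (nn:ℝ) * b ^ (1/2:ℝ)) * (V x ^ θ / c₂)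
          = (4 * V x ^ (1/2:ℝ)/β) * (V x ^ θ / ((nn:ℝ) * c₂))
            + (1/(4 * V x ^ (1/2:ℝ)/β)) * (V x ^ (1/2:ℝ) * V x ^ (1/2:ℝ) + (nn:ℝ) * b)
            + (D ^ (1/2:ℝ) + (nn:ℝ) * b ^ (1/2:ℝ)) * (V x ^ θ / c₂) := by
            rw [hadef, ← hVw]
        _ ≤ β * V x ^ (1/2:ℝ) := hfin
end

section
/- Suppose the Markov kernel P satisfies GE(V, β, b, C) with C = {x : V(x) ≤ d} a sublevel set, and suppose every sublevel set {x : V(x) ≤ r} is small. Then the chain is tame with respect to V; indeed it is tamed by a constant taming function: there exist an integer k ≥ 1, a level d'' ≥ d, β'' ∈ (0, e^{-1}) and b'' < ∞ such that, with F(z) = k for z > d'' and F(z) = 1 for z ≤ d'', the F-subsampled kernel satisfies Q_F V(x) ≤ β''·V(x) + b''·1_{[V(x) ≤ d'']}(x) for all x. -/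
open MeasureTheory ProbabilityTheory ENNReal Set

instance kpow.instIsMarkovKernel {𝓧 : Type*} [MeasurableSpace 𝓧]
    (P : ProbabilityTheory.Kernel 𝓧 𝓧) [IsMarkovKernel P] (n : ℕ) :
    IsMarkovKernel (kpow P n) := by
  induction n with
  | zero => rw [kpow]; infer_instance
  | succ n ih => rw [kpow]; exact Kernel.IsMarkovKernel.comp P _

lemma kpow_one {𝓧 : Type*} [MeasurableSpace 𝓧]
    (P : ProbabilityTheory.Kernel 𝓧 𝓧) : kpow P 1 = P := by
  rw [kpow, kpow]; exact Kernel.comp_id P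

lemma iter_drift {𝓧 : Type*} [MeasurableSpace 𝓧]
    (P : ProbabilityTheory.Kernel 𝓧 𝓧) [IsMarkovKernel P]
    (V : 𝓧 → ℝ) (hVmeas : Measurable V) (hV1 : ∀ x, 1 ≤ V x)
    (β b : ℝ) (hβ : β ∈ Set.Ioo (0 : ℝ) 1) (hb : 0 ≤ b)
    (hGE : ∀ x, ∫⁻ y, ENNReal.ofReal (V y) ∂(P x)
      ≤ ENNReal.ofReal (β * V x + b)) :
    ∀ n x, ∫⁻ y, ENNReal.ofReal (V y) ∂((kpow P n) x)
      ≤ ENNReal.ofReal (β ^ n * V x + b / (1 - β)) := by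
  have hβ1 : (0:ℝ) < 1 - β := by linarith [hβ.2]
  have hB : 0 ≤ b / (1 - β) := div_nonneg hb hβ1.le
  intro n
  induction n with
  | zero =>
    intro x
    rw [kpow, Kernel.id_apply, lintegral_dirac' _ (hVmeas.ennreal_ofReal)]
    refine ENNReal.ofReal_le_ofReal ?_
    nlinarith [hV1 x]
  | succ n ih =>
    intro x
    rw [show kpow P (n+1) = P.comp (kpow P n) from rfl,
      Kernel.lintegral_comp _ _ _ hVmeas.ennreal_ofReal]
    calc ∫⁻ z, ∫⁻ y, ENNReal.ofReal (V y) ∂(P z) ∂(kpow P n) x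
        ≤ ∫⁻ z, ENNReal.ofReal (β * V z + b) ∂(kpow P n) x := by
          exact lintegral_mono fun z => hGE z
      _ = ∫⁻ z, (ENNReal.ofReal β * ENNReal.ofReal (V z) + ENNReal.ofReal b)
            ∂(kpow P n) x := by
          congr 1; ext z
          rw [ENNReal.ofReal_add (mul_nonneg hβ.1.le (le_trans zero_le_one (hV1 z))) hb,
            ENNReal.ofReal_mul hβ.1.le]
      _ = ENNReal.ofReal β * ∫⁻ z, ENNReal.ofReal (V z) ∂(kpow P n) x
            + ENNReal.ofReal b := by
          rw [lintegral_add_right _ measurable_const, lintegral_const_mul _ hVmeas.ennreal_ofReal,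
            lintegral_const, measure_univ, mul_one]
      _ ≤ ENNReal.ofReal β * ENNReal.ofReal (β ^ n * V x + b / (1 - β))
            + ENNReal.ofReal b := by
          gcongr; exact ih x
      _ = ENNReal.ofReal (β ^ (n+1) * V x + b / (1 - β)) := by
          rw [← ENNReal.ofReal_mul hβ.1.le,
            ← ENNReal.ofReal_add (mul_nonneg hβ.1.le
              (add_nonneg (mul_nonneg (pow_nonneg hβ.1.le n) (le_trans zero_le_one (hV1 x))) hB)) hb]
          congr 1
          field_simp
          ring

/-- a geometrically ergodic chain (satisfying GE(V, β, b, C) with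
`C = [V ≤ d]` a sublevel set, all sublevel sets small) is tame with respect to `V`;
indeed it is tamed by a constant taming function: there are `k ≥ 1`, `d'' ≥ d`,
`β'' ∈ (0, e^{-1})` and `b'' < ∞` such that, with `F(z) = k` for `z > d''` and `F(z) = 1`
for `z ≤ d''`, the subsampled kernel satisfies
`Q_F V(x) ≤ β''·V(x) + b''·1_{[V ≤ d'']}(x)` for all `x`. -/
theorem stmt_12 {𝓧 : Type*} [MeasurableSpace 𝓧]
    (P : ProbabilityTheory.Kernel 𝓧 𝓧) [ProbabilityTheory.IsMarkovKernel P]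
    (V : 𝓧 → ℝ) (hVmeas : Measurable V) (hV1 : ∀ x, 1 ≤ V x)
    (β b d : ℝ) (hβ : β ∈ Set.Ioo (0 : ℝ) 1) (hb : 0 ≤ b)
    (C : Set 𝓧) (hCdef : C = {x | V x ≤ d})
    (hGE : ∀ x, ∫⁻ y, ENNReal.ofReal (V y) ∂(P x)
      ≤ ENNReal.ofReal (β * V x + C.indicator (fun _ => b) x))
    (hsmall : ∀ r : ℝ, IsSmallSet P {x | V x ≤ r}) :
    IsTame P V ∧
      ∃ k : ℕ, 1 ≤ k ∧ ∃ d'' : ℝ, d ≤ d'' ∧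
        ∃ β'' ∈ Set.Ioo (0 : ℝ) (Real.exp (-1)), ∃ b'' : ℝ,
          ∀ x, ∫⁻ y, ENNReal.ofReal (V y)
              ∂((kpow P (if V x ≤ d'' then 1 else k)) x)
            ≤ ENNReal.ofReal (β'' * V x
                + Set.indicator {x' | V x' ≤ d''} (fun _ => b'') x) := by
  classical
  have hβ1 : (0:ℝ) < 1 - β := by linarith [hβ.2]
  set B : ℝ := b / (1 - β) with hBdef
  have hB : 0 ≤ B := div_nonneg hb hβ1.le
  have hE : (0:ℝ) < Real.exp 1 := Real.exp_pos 1
  have hei : (0:ℝ) < Real.exp (-1) := Real.exp_pos _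
  have heiE : Real.exp (-1) * Real.exp 1 = 1 := by
    rw [← Real.exp_add]; norm_num
  have hei1 : Real.exp (-1) < 1 := by
    rw [← Real.exp_zero]; exact Real.exp_lt_exp.mpr (by norm_num)
  -- the constant b on indicator
  have hGE' : ∀ x, ∫⁻ y, ENNReal.ofReal (V y) ∂(P x)
      ≤ ENNReal.ofReal (β * V x + b) := by
    intro x
    refine (hGE x).trans (ENNReal.ofReal_le_ofReal ?_)
    have : C.indicator (fun _ => b) x ≤ b := by
      rw [Set.indicator_apply]; split_ifs <;> simp [hb]
    linarith
  have hiter := iter_drift P V hVmeas hV1 β b hβ hb hGE'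
  -- choose k
  obtain ⟨k, hk⟩ := exists_pow_lt_of_lt_one (by positivity : (0:ℝ) < Real.exp (-1) / 4) hβ.2
  have hk1 : 1 ≤ k := by
    by_contra h
    interval_cases k
    simp only [pow_zero] at hk
    linarith
  set d'' : ℝ := max d (4 * Real.exp 1 * B + 1) with hd''def
  have hd''d : d ≤ d'' := le_max_left _ _
  have hd''B : 4 * Real.exp 1 * B + 1 ≤ d'' := le_max_right _ _
  have hd''1 : 1 ≤ d'' := le_trans (by nlinarith) hd''B
  set β'' : ℝ := Real.exp (-1) / 2 with hβ''def
  have hβ''0 : 0 < β'' := by positivity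
  have hβ''e : β'' < Real.exp (-1) := by rw [hβ''def]; linarith
  set b'' : ℝ := β * d'' + b with hb''def
  -- the main drift estimate
  have hmain : ∀ x, ∫⁻ y, ENNReal.ofReal (V y)
      ∂((kpow P (if V x ≤ d'' then 1 else k)) x)
      ≤ ENNReal.ofReal (β'' * V x
          + Set.indicator {x' | V x' ≤ d''} (fun _ => b'') x) := by
    intro x
    by_cases h : V x ≤ d''
    · rw [if_pos h, kpow_one, Set.indicator_of_mem (by exact h)]
      refine (hGE x).trans (ENNReal.ofReal_le_ofReal ?_)
      have h1 : C.indicator (fun _ => b) x ≤ b := by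
        rw [Set.indicator_apply]; split_ifs <;> simp [hb]
      have h2 : β * V x ≤ β * d'' := mul_le_mul_of_nonneg_left h hβ.1.le
      have h3 : 0 ≤ β'' * V x := mul_nonneg hβ''0.le (le_trans zero_le_one (hV1 x))
      rw [hb''def]; linarith
    · rw [if_neg h, Set.indicator_of_notMem (by exact h), add_zero]
      refine (hiter k x).trans (ENNReal.ofReal_le_ofReal ?_)
      push_neg at h
      have hV0 : (0:ℝ) ≤ V x := le_trans zero_le_one (hV1 x)
      have h1 : β ^ k * V x ≤ Real.exp (-1) / 4 * V x :=
        mul_le_mul_of_nonneg_right hk.le hV0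
      have h2 : B ≤ Real.exp (-1) / 4 * d'' := by
        have : Real.exp (-1) / 4 * (4 * Real.exp 1 * B + 1) ≥ B := by nlinarith
        nlinarith
      have h3 : Real.exp (-1) / 4 * d'' ≤ Real.exp (-1) / 4 * V x := by nlinarith
      rw [hβ''def]; linarith
  refine ⟨?_, k, hk1, d'', hd''d, β'', ⟨hβ''0, hβ''e⟩, b'', hmain⟩
  refine ⟨d'', hd''1, hsmall d'', (k:ℝ), by exact_mod_cast hk1, 0, ⟨le_refl _, zero_lt_one⟩,
    β'', ⟨hβ''0, hβ''e.trans hei1⟩, b'', ?_, ?_⟩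
  · have : Real.log β'' < Real.log (Real.exp (-1)) := Real.log_lt_log hβ''0 hβ''e
    rw [Real.log_exp] at this
    simpa [tameBound] using this
  · intro x
    have hF : tamingF (k:ℝ) 0 d'' (V x) = if V x ≤ d'' then 1 else k := by
      rw [tamingF]
      split_ifs with h
      · rfl
      · rw [Real.rpow_zero, mul_one, Nat.ceil_natCast]
    rw [hF]
    exact hmain x
end

section
/- Consider the 'epoch' Markov chain on ℕ = {0,1,2,…} with transition probabilities P(x,x) = θ_x and P(x,0) = 1 − θ_x for x ≥ 1, and P(0,y) = ζ_y for y ∈ ℕ, where θ_x = 1 − κ(x+1)^{−λ} with 0 < κ ≤ 1 and λ > 0, and (ζ_y)_{y∈ℕ} is a probability distribution on ℕ. Suppose there exists ε > 0 such that Σ_y ζ_y·(y+1)^{(1+ε)λ} < ∞. Set m = (1+ε)λ, V(x) = (x+1)^m and α = ε/(1+ε). Then for every c ∈ (0, κ) there exist b < ∞ and x₀ ∈ ℕ such that Σ_y P(x,y)·V(y) ≤ V(x) − c·V(x)^α + b·1_{[x ≤ x₀]} for all x ∈ ℕ. -/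
open Real

/-- epoch chain: for the chain on `ℕ` with `P(x,x) = θ_x`,
`P(x,0) = 1 − θ_x` (for `x ≥ 1`) and `P(0,·) = ζ`, where `θ_x = 1 − κ(x+1)^{−λ}`, if
`Σ_y ζ_y (y+1)^{(1+ε)λ} < ∞` then, with `m = (1+ε)λ`, `V(x) = (x+1)^m` and
`α = ε/(1+ε)`, for every `c ∈ (0,κ)` there are `b < ∞` and `x₀` with
`PV(x) ≤ V(x) − c·V(x)^α + b·1_{[x ≤ x₀]}` for all `x`. -/
theorem stmt_13 (κ lam ε : ℝ) (hκ : 0 < κ) (hκ1 : κ ≤ 1) (hlam : 0 < lam) (hε : 0 < ε)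
    (θ : ℕ → ℝ) (hθ : ∀ x : ℕ, θ x = 1 - κ * ((x : ℝ) + 1) ^ (-lam))
    (ζ : ℕ → ℝ) (hζ0 : ∀ y, 0 ≤ ζ y) (hζ1 : HasSum ζ 1)
    (hmoment : Summable (fun y : ℕ => ζ y * ((y : ℝ) + 1) ^ ((1 + ε) * lam)))
    (P : ℕ → ℕ → ℝ)
    (hPxx : ∀ x : ℕ, 1 ≤ x → P x x = θ x)
    (hPx0 : ∀ x : ℕ, 1 ≤ x → P x 0 = 1 - θ x)
    (hPoff : ∀ x : ℕ, 1 ≤ x → ∀ y : ℕ, y ≠ x → y ≠ 0 → P x y = 0)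
    (hP0 : ∀ y : ℕ, P 0 y = ζ y) :
    ∀ c : ℝ, 0 < c → c < κ → ∃ b : ℝ, ∃ x₀ : ℕ, ∀ x : ℕ,
      (∑' y : ℕ, P x y * ((y : ℝ) + 1) ^ ((1 + ε) * lam))
        ≤ ((x : ℝ) + 1) ^ ((1 + ε) * lam)
          - c * (((x : ℝ) + 1) ^ ((1 + ε) * lam)) ^ (ε / (1 + ε))
          + (if x ≤ x₀ then b else 0) := by
  intro c hc hcκ
  set m : ℝ := (1 + ε) * lam with hm
  have hm0 : 0 < m := by positivity
  have hε1 : (0:ℝ) < 1 + ε := by linarith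
  have hmα : m * (ε / (1 + ε)) = ε * lam := by field_simp [hm]; ring
  have hVα : ∀ x : ℕ, (((x : ℝ) + 1) ^ m) ^ (ε / (1 + ε)) = ((x : ℝ) + 1) ^ (ε * lam) := by
    intro x
    rw [← Real.rpow_mul (by positivity), hmα]
  set S : ℝ := ∑' y, ζ y * ((y : ℝ) + 1) ^ m with hSdef
  have hS0 : 0 ≤ S := tsum_nonneg fun y =>
    mul_nonneg (hζ0 y) (Real.rpow_nonneg (by positivity) _)
  set x₀ : ℕ := ⌈(κ / (κ - c)) ^ (1 / m)⌉₊ with hx₀def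
  refine ⟨S + κ + c * ((x₀ : ℝ) + 1) ^ (ε * lam), x₀, ?_⟩
  intro x
  rw [hVα x]
  rcases Nat.eq_zero_or_pos x with hx0 | hx1
  · -- x = 0
    subst hx0
    have hsum : (∑' y : ℕ, P 0 y * ((y : ℝ) + 1) ^ m) = S := by
      rw [hSdef]; exact tsum_congr fun y => by rw [hP0 y]
    rw [hsum]
    have h0 : ((0 : ℕ) : ℝ) + 1 = 1 := by norm_num
    rw [h0, Real.one_rpow, Real.one_rpow]
    have hind : (if (0:ℕ) ≤ x₀ then S + κ + c * ((x₀ : ℝ) + 1) ^ (ε * lam) else 0)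
        = S + κ + c * ((x₀ : ℝ) + 1) ^ (ε * lam) := by simp
    rw [hind]
    have h1 : (1:ℝ) ≤ ((x₀ : ℝ) + 1) ^ (ε * lam) :=
      Real.one_le_rpow (by linarith [Nat.cast_nonneg (α:=ℝ) x₀]) (by positivity)
    nlinarith
  · -- x ≥ 1
    set X : ℝ := (x : ℝ) + 1 with hX
    have hX1 : (1:ℝ) ≤ X := by have := Nat.cast_nonneg (α:=ℝ) x; linarith [hX]
    have hXpos : (0:ℝ) < X := by linarith
    have hsum : (∑' y : ℕ, P x y * ((y : ℝ) + 1) ^ m)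
        = P x 0 * 1 + P x x * X ^ m := by
      rw [tsum_eq_sum (s := {0, x}) (by
        intro y hy
        simp only [Finset.mem_insert, Finset.mem_singleton] at hy
        push_neg at hy
        rw [hPoff x hx1 y hy.2 hy.1, zero_mul])]
      rw [Finset.sum_pair (by omega : (0:ℕ) ≠ x)]
      norm_num [Real.one_rpow]
      exact Or.inl rfl
    rw [hsum, hPx0 x hx1, hPxx x hx1, hθ x]
    have h1 : X ^ (-lam) * X ^ m = X ^ (ε * lam) := by
      rw [← Real.rpow_add hXpos]; ring_nf
      rw [hm]; ring_nf
    have h2 : X ^ (-lam) ≤ 1 :=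
      Real.rpow_le_one_of_one_le_of_nonpos hX1 (by linarith)
    have h3 : (0:ℝ) < X ^ (ε * lam) := Real.rpow_pos_of_pos hXpos _
    have h4 : (0:ℝ) < X ^ (-lam) := Real.rpow_pos_of_pos hXpos _
    by_cases hxx : x ≤ x₀
    · simp only [hxx, if_true]
      have h5 : (0:ℝ) ≤ c * ((x₀ : ℝ) + 1) ^ (ε * lam) :=
        mul_nonneg hc.le (Real.rpow_nonneg (by positivity) _)
      nlinarith
    · simp only [hxx, if_false]
      -- need κ X^{-λ} ≤ (κ-c) X^{ελ}
      have hx₀x : ((x₀ : ℝ)) ≤ (x : ℝ) := by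
        exact_mod_cast Nat.le_of_lt (Nat.lt_of_not_le hxx)
      have ha : (0:ℝ) ≤ κ / (κ - c) := div_nonneg hκ.le (by linarith)
      have hax : (κ / (κ - c)) ^ (1 / m) ≤ X := by
        calc (κ / (κ - c)) ^ (1 / m) ≤ (x₀ : ℝ) := Nat.le_ceil _
        _ ≤ X := by linarith [hx₀x]
      have hXm : κ / (κ - c) ≤ X ^ m := by
        calc κ / (κ - c) = ((κ / (κ - c)) ^ (1 / m)) ^ m := by
              rw [← Real.rpow_mul ha, one_div_mul_cancel hm0.ne', Real.rpow_one]
        _ ≤ X ^ m := Real.rpow_le_rpow (Real.rpow_nonneg ha _) hax hm0.le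
      have hkey : κ ≤ (κ - c) * X ^ m := by
        have := (div_le_iff₀ (by linarith : (0:ℝ) < κ - c)).mp hXm
        linarith
      have hfin : κ * X ^ (-lam) ≤ (κ - c) * X ^ (ε * lam) := by
        have := mul_le_mul_of_nonneg_right hkey h4.le
        calc κ * X ^ (-lam) ≤ (κ - c) * X ^ m * X ^ (-lam) := this
        _ = (κ - c) * X ^ (ε * lam) := by rw [mul_assoc, mul_comm (X ^ m), h1]
      nlinarith
end

section
/- Consider the 'delayed death' Markov chain on ℕ = {0,1,2,…} with transition probabilities P(x,x) = θ_x and P(x,x−1) = 1 − θ_x for x ≥ 1, and P(0,y) = ζ_y for y ∈ ℕ, where θ_x = 1 − κ(x+1)^{−λ} with 0 < κ ≤ 1 and λ > 1, and (ζ_y)_{y∈ℕ} is a probability distribution on ℕ with Σ_y ζ_y·(y+1)^{2λ} < ∞. Set V(x) = (x+1)^{2λ} and α = (λ−1)/(2λ). Then there exist c > 0, b < ∞ and x₀ ∈ ℕ such that Σ_y P(x,y)·V(y) ≤ V(x) − c·V(x)^α + b·1_{[x ≤ x₀]} for all x ∈ ℕ. -/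
open Real

/-- delayed death process: for the chain on `ℕ` with `P(x,x) = θ_x`,
`P(x,x−1) = 1 − θ_x` (for `x ≥ 1`) and `P(0,·) = ζ`, where `θ_x = 1 − κ(x+1)^{−λ}` with
`λ > 1` and `Σ_y ζ_y (y+1)^{2λ} < ∞`, with `V(x) = (x+1)^{2λ}` and `α = (λ−1)/(2λ)`,
there are `c > 0`, `b < ∞` and `x₀` with
`PV(x) ≤ V(x) − c·V(x)^α + b·1_{[x ≤ x₀]}` for all `x`. -/
theorem stmt_14 (κ lam : ℝ) (hκ : 0 < κ) (hκ1 : κ ≤ 1) (hlam : 1 < lam)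
    (θ : ℕ → ℝ) (hθ : ∀ x : ℕ, θ x = 1 - κ * ((x : ℝ) + 1) ^ (-lam))
    (ζ : ℕ → ℝ) (hζ0 : ∀ y, 0 ≤ ζ y) (hζ1 : HasSum ζ 1)
    (hmoment : Summable (fun y : ℕ => ζ y * ((y : ℝ) + 1) ^ (2 * lam)))
    (P : ℕ → ℕ → ℝ)
    (hPxx : ∀ x : ℕ, 1 ≤ x → P x x = θ x)
    (hPdown : ∀ x : ℕ, 1 ≤ x → P x (x - 1) = 1 - θ x)
    (hPoff : ∀ x : ℕ, 1 ≤ x → ∀ y : ℕ, y ≠ x → y ≠ x - 1 → P x y = 0)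
    (hP0 : ∀ y : ℕ, P 0 y = ζ y) :
    ∃ c : ℝ, 0 < c ∧ ∃ b : ℝ, ∃ x₀ : ℕ, ∀ x : ℕ,
      (∑' y : ℕ, P x y * ((y : ℝ) + 1) ^ (2 * lam))
        ≤ ((x : ℝ) + 1) ^ (2 * lam)
          - c * (((x : ℝ) + 1) ^ (2 * lam)) ^ ((lam - 1) / (2 * lam))
          + (if x ≤ x₀ then b else 0) := by
  refine ⟨κ, hκ, (∑' y : ℕ, ζ y * ((y : ℝ) + 1) ^ (2 * lam)) + κ, 0, fun x => ?_⟩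
  rcases Nat.eq_zero_or_pos x with rfl | hx
  · have h0 : (∑' y : ℕ, P 0 y * ((y : ℝ) + 1) ^ (2 * lam))
        = ∑' y : ℕ, ζ y * ((y : ℝ) + 1) ^ (2 * lam) := by
      exact tsum_congr fun y => by rw [hP0]
    rw [h0, if_pos (le_refl 0)]
    simp only [Nat.cast_zero, zero_add, Real.one_rpow]
    linarith
  · have hx1 : (1 : ℕ) ≤ x := hx
    have hxne : x - 1 ≠ x := by omega
    have hxp : (0 : ℝ) < (x : ℝ) := by exact_mod_cast hx
    have hb : (0 : ℝ) < (x : ℝ) + 1 := by linarith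
    have hcast : ((x - 1 : ℕ) : ℝ) + 1 = (x : ℝ) := by
      rw [Nat.cast_sub hx1]; simp
    have hsum : (∑' y : ℕ, P x y * ((y : ℝ) + 1) ^ (2 * lam))
        = P x (x - 1) * (((x - 1 : ℕ) : ℝ) + 1) ^ (2 * lam)
          + P x x * (((x : ℕ) : ℝ) + 1) ^ (2 * lam) := by
      rw [tsum_eq_sum (s := {x - 1, x}) ?_]
      · rw [Finset.sum_insert (by simp [hxne]), Finset.sum_singleton]
      · intro y hy
        simp only [Finset.mem_insert, Finset.mem_singleton, not_or] at hy
        rw [hPoff x hx1 y hy.2 hy.1, zero_mul]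
    rw [hsum, hPdown x hx1, hPxx x hx1, hθ x, hcast, if_neg (by omega)]
    set q : ℝ := κ * ((x : ℝ) + 1) ^ (-lam) with hq
    have hqpos : 0 < q := mul_pos hκ (Real.rpow_pos_of_pos hb _)
    -- key lower bound: V x - V(x-1) ≥ (x+1)^(2λ-1)
    have e1 : (x : ℝ) ^ (2 * lam) = (x : ℝ) ^ ((1 : ℝ)) * (x : ℝ) ^ (2 * lam - 1) := by
      rw [← Real.rpow_add hxp]; norm_num
    have key1 : (x : ℝ) ^ (2 * lam) ≤ (x : ℝ) * ((x : ℝ) + 1) ^ (2 * lam - 1) := by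
      rw [e1, Real.rpow_one]
      have := Real.rpow_le_rpow (le_of_lt hxp) (by linarith : (x : ℝ) ≤ (x : ℝ) + 1)
        (by linarith : (0 : ℝ) ≤ 2 * lam - 1)
      nlinarith
    have key2 : ((x : ℝ) + 1) ^ (2 * lam) = ((x : ℝ) + 1) * ((x : ℝ) + 1) ^ (2 * lam - 1) := by
      rw [show ((x : ℝ) + 1) ^ (2 * lam) = ((x : ℝ) + 1) ^ ((1 : ℝ)) * ((x : ℝ) + 1) ^ (2 * lam - 1)
        from by rw [← Real.rpow_add hb]; norm_num, Real.rpow_one]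
    have key3 : ((x : ℝ) + 1) ^ (2 * lam - 1)
        ≤ ((x : ℝ) + 1) ^ (2 * lam) - (x : ℝ) ^ (2 * lam) := by
      rw [key2]; nlinarith
    -- q * (x+1)^(2λ-1) = κ * (x+1)^(λ-1)
    have key4 : q * ((x : ℝ) + 1) ^ (2 * lam - 1) = κ * ((x : ℝ) + 1) ^ (lam - 1) := by
      rw [hq, mul_assoc, ← Real.rpow_add hb]
      ring_nf
    -- (V x)^α = (x+1)^(λ-1)
    have hlam0 : (2 * lam) ≠ 0 := by positivity
    have key5 : (((x : ℝ) + 1) ^ (2 * lam)) ^ ((lam - 1) / (2 * lam))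
        = ((x : ℝ) + 1) ^ (lam - 1) := by
      rw [← Real.rpow_mul (le_of_lt hb)]
      congr 1
      field_simp
    rw [key5]
    have key6 : κ * ((x : ℝ) + 1) ^ (lam - 1)
        ≤ q * (((x : ℝ) + 1) ^ (2 * lam) - (x : ℝ) ^ (2 * lam)) := by
      rw [← key4]
      exact mul_le_mul_of_nonneg_left key3 (le_of_lt hqpos)
    nlinarith [Real.rpow_pos_of_pos hb (2 * lam), Real.rpow_pos_of_pos hxp (2 * lam)]
end

section
/- For the random walk on the half-line, suppose 𝔼[(Z^+)²] < ∞ (with 𝔼[Z] = −μ < 0 as above, and no boundedness assumption on Z). Then the chain is tame with respect to the scale function V(x) = (x+1)²: there exist d' ≥ 1 such that {x : V(x) ≤ d'} is a small set, and constants λ̃ > 0, β ∈ (0, 1/4) and b' < ∞ such that, with the taming function F(z) = ⌈λ̃·z^{1/2}⌉ for z > d' and F(z) = 1 for z ≤ d', the F-subsampled kernel Q_F(x,·) = P^{F(V(x))}(x,·) satisfies Q_F V(x) ≤ β·V(x) + b'·1_{[V(x) ≤ d']} for all x ≥ 0. (Note that β < 1/4 means log β < (1/2)^{-1}·log(1 −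 1/2), the inequality required for tameness with exponent δ = 1/2.) -/
open MeasureTheory ProbabilityTheory ENNReal

section kpowlemmas
variable {𝓧 : Type*} [MeasurableSpace 𝓧]

instance kpow_markov_s18 (P : Kernel 𝓧 𝓧) [IsMarkovKernel P] (n : ℕ) :
    IsMarkovKernel (kpow P n) := by
  induction n with
  | zero => rw [kpow]; infer_instance
  | succ n ih => rw [kpow]; exact Kernel.IsMarkovKernel.comp P (kpow P n)

lemma kpow_succ'_s18 (P : Kernel 𝓧 𝓧) [IsMarkovKernel P] (n : ℕ) :
    kpow P (n + 1) = (kpow P n).comp P := by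
  induction n with
  | zero => show P.comp _ = _; rw [kpow, Kernel.comp_id, Kernel.id_comp]
  | succ n ih =>
    show P ∘ₖ (kpow P (n+1)) = (kpow P (n+1)) ∘ₖ P
    conv_lhs => rw [ih]
    conv_rhs => rw [show kpow P (n+1) = P ∘ₖ (kpow P n) from rfl]
    rw [Kernel.comp_assoc]

end kpowlemmas

lemma meas_maxadd (x : ℝ) : Measurable (fun z : ℝ => max (x + z) 0) :=
  (measurable_id.const_add x).max measurable_const

lemma ofReal_max_zero (a : ℝ) : ENNReal.ofReal (max a 0) = ENNReal.ofReal a := by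
  rcases le_total a 0 with h | h
  · rw [max_eq_right h, ENNReal.ofReal_eq_zero.2 h, ENNReal.ofReal_zero]
  · rw [max_eq_left h]

lemma ofReal_integral_le {ν : Measure ℝ} {f : ℝ → ℝ} (hf : Integrable f ν) :
    ENNReal.ofReal (∫ z, f z ∂ν) ≤ ∫⁻ z, ENNReal.ofReal (f z) ∂ν := by
  have h1 : ∫ z, f z ∂ν ≤ ∫ z, max (f z) 0 ∂ν :=
    integral_mono hf hf.pos_part fun z => le_max_left _ _
  calc ENNReal.ofReal (∫ z, f z ∂ν) ≤ ENNReal.ofReal (∫ z, max (f z) 0 ∂ν) :=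
        ENNReal.ofReal_le_ofReal h1
    _ = ∫⁻ z, ENNReal.ofReal (max (f z) 0) ∂ν :=
        ofReal_integral_eq_lintegral_ofReal hf.pos_part
          (Filter.Eventually.of_forall fun z => le_max_right _ _)
    _ = ∫⁻ z, ENNReal.ofReal (f z) ∂ν := by
        simp_rw [ofReal_max_zero]

lemma max_shift (y z : ℝ) : max (y + z) 0 = y + max z (-y) := by
  rcases le_total z (-y) with h | h
  · rw [max_eq_right h, max_eq_right (by linarith : y + z ≤ 0)]; ring
  · rw [max_eq_left h, max_eq_left (by linarith : (0:ℝ) ≤ y + z)]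

lemma sq_max_split (y z : ℝ) (hy : 0 ≤ y) :
    (max z (-y)) ^ 2 = (max z 0) ^ 2 + (min (max (-z) 0) y) ^ 2 := by
  rcases le_total 0 z with h | h
  · rw [max_eq_left (by linarith : -y ≤ z), max_eq_left h,
      max_eq_right (by linarith : -z ≤ 0), min_eq_left hy]
    ring
  · rw [max_eq_right h, max_eq_left (by linarith : (0:ℝ) ≤ -z)]
    rcases le_total z (-y) with h2 | h2
    · rw [max_eq_right h2, min_eq_right (by linarith : y ≤ -z)]; ring
    · rw [max_eq_left h2, min_eq_left (by linarith : -z ≤ y)]; ring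

lemma max_le_abs (y z : ℝ) (hy : 0 ≤ y) : max z (-y) ≤ |z| := by
  rcases le_total z (-y) with h | h
  · rw [max_eq_right h]
    have : -y ≤ 0 := by linarith
    calc -y ≤ 0 := this
      _ ≤ |z| := abs_nonneg z
  · exact max_le (le_abs_self z) (by have := abs_nonneg z; linarith)

lemma meas_min_sq (y : ℝ) : Measurable (fun z : ℝ => (min (max (-z) 0) y) ^ 2) :=
  (((measurable_neg.max measurable_const).min measurable_const).pow_const 2)

section drift

variable (ν : Measure ℝ) [IsProbabilityMeasure ν]

lemma w_int (hint : Integrable (fun z : ℝ => z) ν) (y : ℝ) (hy : 0 ≤ y) :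
    Integrable (fun z : ℝ => max z (-y)) ν := by
  refine Integrable.mono' hint.abs
    ((measurable_id.max measurable_const).aestronglyMeasurable) ?_
  refine Filter.Eventually.of_forall fun z => ?_
  rw [Real.norm_eq_abs, abs_le]
  constructor
  · have := neg_abs_le z
    have h2 : -y ≤ max z (-y) := le_max_right _ _
    rcases le_total z (-y) with h | h
    · rw [max_eq_right h]
      have hz : z ≤ 0 := by linarith
      rw [abs_of_nonpos hz]; linarith
    · rw [max_eq_left h]; exact neg_abs_le z
  · exact max_le_abs y z hy

lemma min_sq_int (y : ℝ) (hy : 0 ≤ y) :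
    Integrable (fun z : ℝ => (min (max (-z) 0) y) ^ 2) ν := by
  refine Integrable.mono' (integrable_const (y ^ 2)) (meas_min_sq y).aestronglyMeasurable ?_
  refine Filter.Eventually.of_forall fun z => ?_
  have h0 : 0 ≤ min (max (-z) 0) y := le_min (le_max_right _ _) hy
  have h1 : min (max (-z) 0) y ≤ y := min_le_right _ _
  rw [Real.norm_eq_abs, abs_of_nonneg (by positivity)]
  nlinarith

lemma w_sq_int (hsq : Integrable (fun z : ℝ => (max z 0) ^ 2) ν) (y : ℝ) (hy : 0 ≤ y) :
    Integrable (fun z : ℝ => (max z (-y)) ^ 2) ν := by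
  have : (fun z : ℝ => (max z (-y)) ^ 2)
      = fun z => (max z 0) ^ 2 + (min (max (-z) 0) y) ^ 2 :=
    funext fun z => sq_max_split y z hy
  rw [this]
  exact hsq.add (min_sq_int ν y hy)

lemma step_int (hint : Integrable (fun z : ℝ => z) ν)
    (hsq : Integrable (fun z : ℝ => (max z 0) ^ 2) ν) (y : ℝ) (hy : 0 ≤ y) :
    Integrable (fun z : ℝ => (max (y + z) 0 + 1) ^ 2) ν := by
  have hpt : ∀ z : ℝ, (max (y + z) 0 + 1) ^ 2
      = (y + 1) ^ 2 + ((2 * (y + 1)) * max z (-y) + (max z (-y)) ^ 2) := by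
    intro z; rw [max_shift]; ring
  have : (fun z : ℝ => (max (y + z) 0 + 1) ^ 2)
      = fun z => (y + 1) ^ 2 + ((2 * (y + 1)) * max z (-y) + (max z (-y)) ^ 2) :=
    funext hpt
  rw [this]
  exact (integrable_const _).add (((w_int ν hint y hy).const_mul _).add (w_sq_int ν hsq y hy))

lemma h_expand (hint : Integrable (fun z : ℝ => z) ν)
    (hsq : Integrable (fun z : ℝ => (max z 0) ^ 2) ν) (y : ℝ) (hy : 0 ≤ y) :
    ∫ z, (max (y + z) 0 + 1) ^ 2 ∂ν
      = (y + 1) ^ 2 + 2 * (y + 1) * (∫ z, max z (-y) ∂ν)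
        + ((∫ z, (max z 0) ^ 2 ∂ν) + ∫ z, (min (max (-z) 0) y) ^ 2 ∂ν) := by
  have hpt : (fun z : ℝ => (max (y + z) 0 + 1) ^ 2)
      = fun z => (y + 1) ^ 2 + ((2 * (y + 1)) * max z (-y)
          + ((max z 0) ^ 2 + (min (max (-z) 0) y) ^ 2)) := by
    funext z
    rw [max_shift, ← sq_max_split y z hy]; ring
  have i3 : Integrable (fun z : ℝ => (max z 0) ^ 2 + (min (max (-z) 0) y) ^ 2) ν :=
    hsq.add (min_sq_int ν y hy)
  have i2 : Integrable (fun z : ℝ => 2 * (y + 1) * max z (-y)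
      + ((max z 0) ^ 2 + (min (max (-z) 0) y) ^ 2)) ν :=
    ((w_int ν hint y hy).const_mul _).add i3
  rw [hpt]
  rw [integral_add (integrable_const ((y + 1) ^ 2)) i2]
  rw [integral_add ((w_int ν hint y hy).const_mul _) i3]
  rw [integral_add hsq (min_sq_int ν y hy)]
  rw [integral_const, integral_const_mul]
  simp [measure_univ]
  ring

open Filter in
lemma drift_lemma (hint : Integrable (fun z : ℝ => z) ν)
    (μm : ℝ) (hmean : ∫ z, z ∂ν = -μm) (hμm : 0 < μm)
    (hsq : Integrable (fun z : ℝ => (max z 0) ^ 2) ν) :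
    ∃ K : ℝ, 0 ≤ K ∧ ∀ y : ℝ, 0 ≤ y →
      ∫ z, (max (y + z) 0 + 1) ^ 2 ∂ν
        ≤ (y + 1) ^ 2 - (7 / 4 * μm) * (y + 1) + K := by
  set A : ℝ := ∫ z, |z| ∂ν with hAdef
  set B : ℝ := ∫ z, (max z 0) ^ 2 ∂ν with hBdef
  have hA0 : 0 ≤ A := integral_nonneg fun z => abs_nonneg z
  have hB0 : 0 ≤ B := integral_nonneg fun z => sq_nonneg _
  -- L1 : the truncated mean tends to -μm
  have L1 : Tendsto (fun y : ℝ => ∫ z, max z (-y) ∂ν) atTop (nhds (-μm)) := by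
    rw [← hmean]
    refine tendsto_integral_filter_of_dominated_convergence (fun z => |z|)
      (Eventually.of_forall fun y =>
        (measurable_id.max measurable_const).aestronglyMeasurable) ?_ hint.abs ?_
    · filter_upwards [eventually_ge_atTop (0:ℝ)] with y hy
      refine Eventually.of_forall fun z => ?_
      rw [Real.norm_eq_abs, abs_le]
      constructor
      · rcases le_total z (-y) with h | h
        · rw [max_eq_right h]
          have hz : z ≤ 0 := by linarith
          rw [abs_of_nonpos hz]; linarith
        · rw [max_eq_left h]; exact neg_abs_le z
      · exact max_le_abs y z hy
    · refine Eventually.of_forall fun z => ?_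
      refine Tendsto.congr' ?_ tendsto_const_nhds
      filter_upwards [eventually_ge_atTop (-z)] with y hy
      exact (max_eq_left (by linarith : -y ≤ z)).symm
  -- L2 : the normalized truncated negative-part second moment tends to 0
  have L2 : Tendsto (fun y : ℝ => ∫ z, (min (max (-z) 0) y) ^ 2 / y ∂ν) atTop (nhds 0) := by
    have T : Tendsto (fun y : ℝ => ∫ z, (min (max (-z) 0) y) ^ 2 / y ∂ν) atTop
        (nhds (∫ _ : ℝ, (0:ℝ) ∂ν)) := by
      refine tendsto_integral_filter_of_dominated_convergence (fun z => |z|)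
        (Eventually.of_forall fun y =>
          ((meas_min_sq y).div_const y).aestronglyMeasurable) ?_ hint.abs ?_
      · filter_upwards [eventually_ge_atTop (1:ℝ)] with y hy
        refine Eventually.of_forall fun z => ?_
        have hy0 : (0:ℝ) < y := by linarith
        have h0 : 0 ≤ min (max (-z) 0) y := le_min (le_max_right _ _) hy0.le
        have h1 : min (max (-z) 0) y ≤ y := min_le_right _ _
        have h2 : min (max (-z) 0) y ≤ max (-z) 0 := min_le_left _ _
        have h3 : max (-z) 0 ≤ |z| := max_le (neg_le_abs z) (abs_nonneg z)
        rw [Real.norm_eq_abs, abs_of_nonneg (by positivity)]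
        rw [div_le_iff₀ hy0]
        nlinarith
      · refine Eventually.of_forall fun z => ?_
        have : Tendsto (fun y : ℝ => (max (-z) 0) ^ 2 / y) atTop (nhds 0) :=
          Tendsto.div_atTop tendsto_const_nhds tendsto_id
        refine Tendsto.congr' ?_ this
        filter_upwards [eventually_ge_atTop (max (-z) 0)] with y hy
        rw [min_eq_left hy]
    simpa using T
  -- choose the threshold
  have E1 : ∀ᶠ y in atTop, (∫ z, max z (-y) ∂ν) ≤ -μm + μm / 16 :=
    L1.eventually_le_const (by linarith)
  have E2 : ∀ᶠ y in atTop, (∫ z, (min (max (-z) 0) y) ^ 2 / y ∂ν) ≤ μm / 16 :=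
    L2.eventually_le_const (by linarith)
  obtain ⟨y₀, hy₀⟩ := eventually_atTop.mp (E1.and E2)
  set Y : ℝ := max y₀ 1 with hYdef
  have hY1 : (1:ℝ) ≤ Y := le_max_right _ _
  refine ⟨2 * (Y + 1) * A + 2 * B + Y ^ 2 + (7 / 4 * μm) * (Y + 1), by positivity, ?_⟩
  intro y hy
  have hI1A : (∫ z, max z (-y) ∂ν) ≤ A :=
    integral_mono (w_int ν hint y hy) hint.abs fun z => max_le_abs y z hy
  rw [h_expand ν hint hsq y hy]
  rcases le_total Y y with hc | hc
  · -- large y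
    have hyY := hy₀ y (le_trans (le_max_left _ _) hc)
    have hy1 : (1:ℝ) ≤ y := le_trans hY1 hc
    have hyne : y ≠ 0 := by linarith
    have hJ : (∫ z, (min (max (-z) 0) y) ^ 2 ∂ν)
        = (∫ z, (min (max (-z) 0) y) ^ 2 / y ∂ν) * y := by
      rw [← integral_mul_const]
      congr 1
      funext z
      rw [div_mul_cancel₀ _ hyne]
    have hJ2 : (∫ z, (min (max (-z) 0) y) ^ 2 ∂ν) ≤ μm / 16 * y := by
      rw [hJ]
      exact mul_le_mul_of_nonneg_right hyY.2 (by linarith)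
    have e1 : 2 * (y + 1) * (∫ z, max z (-y) ∂ν) ≤ 2 * (y + 1) * (-μm + μm / 16) :=
      mul_le_mul_of_nonneg_left hyY.1 (by linarith)
    have hμy : 0 ≤ μm * (y + 1) := by positivity
    nlinarith
  · -- small y
    have hJ2 : (∫ z, (min (max (-z) 0) y) ^ 2 ∂ν) ≤ y ^ 2 := by
      have : (∫ z, (min (max (-z) 0) y) ^ 2 ∂ν) ≤ ∫ _ : ℝ, y ^ 2 ∂ν := by
        refine integral_mono (min_sq_int ν y hy) (integrable_const _) fun z => ?_
        have h0 : 0 ≤ min (max (-z) 0) y := le_min (le_max_right _ _) hy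
        have h1 : min (max (-z) 0) y ≤ y := min_le_right _ _
        nlinarith
      simpa [measure_univ] using this
    have e1 : 2 * (y + 1) * (∫ z, max z (-y) ∂ν) ≤ 2 * (Y + 1) * A := by
      have h1 : 2 * (y + 1) * (∫ z, max z (-y) ∂ν) ≤ 2 * (y + 1) * A :=
        mul_le_mul_of_nonneg_left hI1A (by linarith)
      nlinarith
    have e2 : (7 / 4 * μm) * (y + 1) ≤ (7 / 4 * μm) * (Y + 1) := by nlinarith
    nlinarith

end drift

section kernellift

variable (ν : Measure ℝ) [IsProbabilityMeasure ν]
variable (P : Kernel ℝ ℝ) [IsMarkovKernel P]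

lemma lift_V (hP : ∀ x : ℝ, P x = ν.map (fun z => max (x + z) 0))
    (hint : Integrable (fun z : ℝ => z) ν)
    (hsq : Integrable (fun z : ℝ => (max z 0) ^ 2) ν) (y : ℝ) (hy : 0 ≤ y) :
    ∫⁻ w, ENNReal.ofReal ((w + 1) ^ 2) ∂(P y)
      = ENNReal.ofReal (∫ z, (max (y + z) 0 + 1) ^ 2 ∂ν) := by
  have hm : Measurable fun w : ℝ => ENNReal.ofReal ((w + 1) ^ 2) := by fun_prop
  rw [hP y, lintegral_map hm (meas_maxadd y)]
  rw [ofReal_integral_eq_lintegral_ofReal (step_int ν hint hsq y hy)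
    (Filter.Eventually.of_forall fun z => by positivity)]

lemma supp_lemma (hP : ∀ x : ℝ, P x = ν.map (fun z => max (x + z) 0)) :
    ∀ n : ℕ, ∀ x : ℝ, 0 ≤ x → ∀ᵐ y ∂((kpow P n) x), 0 ≤ y := by
  have hS : MeasurableSet {y : ℝ | y < 0} := measurableSet_lt measurable_id measurable_const
  have hPzero : ∀ t : ℝ, P t {y : ℝ | y < 0} = 0 := by
    intro t
    rw [hP t, Measure.map_apply (meas_maxadd t) hS]
    have : (fun z : ℝ => max (t + z) 0) ⁻¹' {y : ℝ | y < 0} = ∅ := by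
      refine Set.eq_empty_iff_forall_notMem.2 fun z hz => ?_
      simp only [Set.mem_preimage, Set.mem_setOf_eq] at hz
      exact absurd hz (not_lt.2 (le_max_right _ _))
    rw [this, measure_empty]
  intro n x hx
  rw [ae_iff]
  have hset : {y : ℝ | ¬ 0 ≤ y} = {y : ℝ | y < 0} := by
    ext y; simp [not_le]
  rw [hset]
  cases n with
  | zero =>
    rw [kpow, Kernel.id_apply, Measure.dirac_apply]
    simp [Set.indicator_apply, not_lt.2 hx]
  | succ n =>
    rw [show kpow P (n+1) = P ∘ₖ kpow P n from rfl, Kernel.comp_apply' _ _ _ hS]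
    simp [hPzero]

lemma G_lower (hP : ∀ x : ℝ, P x = ν.map (fun z => max (x + z) 0))
    (hint : Integrable (fun z : ℝ => z) ν)
    (μm : ℝ) (hmean : ∫ z, z ∂ν = -μm) (hμm : 0 < μm) :
    ∀ n : ℕ, ∀ x : ℝ, ENNReal.ofReal (x + 1 - μm * n)
      ≤ ∫⁻ y, ENNReal.ofReal (y + 1) ∂((kpow P n) x) := by
  have hmeas : Measurable (fun y : ℝ => ENNReal.ofReal (y + 1)) := by fun_prop
  have hstep : ∀ t : ℝ, ENNReal.ofReal (t + 1 - μm)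
      ≤ ∫⁻ w, ENNReal.ofReal (w + 1) ∂(P t) := by
    intro t
    rw [hP t, lintegral_map hmeas (meas_maxadd t)]
    have hint' : Integrable (fun z : ℝ => t + z + 1) ν := by
      have h2 : Integrable (fun z : ℝ => (t + 1) + z) ν := by
        exact (integrable_const _).add hint
      have : (fun z : ℝ => t + z + 1) = fun z : ℝ => (t + 1) + z := by funext z; ring
      rw [this]; exact h2
    have hval : ∫ z, (t + z + 1) ∂ν = t + 1 - μm := by
      have : (fun z : ℝ => t + z + 1) = fun z : ℝ => (t + 1) + z := by funext z; ring
      have h2 : Integrable (fun z : ℝ => (t + 1) + z) ν := by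
        exact (integrable_const _).add hint
      rw [this, integral_add (integrable_const _) hint, integral_const, hmean]
      simp [measure_univ]
      ring
    calc ENNReal.ofReal (t + 1 - μm) = ENNReal.ofReal (∫ z, (t + z + 1) ∂ν) := by rw [hval]
      _ ≤ ∫⁻ z, ENNReal.ofReal (t + z + 1) ∂ν := ofReal_integral_le hint'
      _ ≤ ∫⁻ z, ENNReal.ofReal (max (t + z) 0 + 1) ∂ν := by
          refine lintegral_mono fun z => ENNReal.ofReal_le_ofReal ?_
          have := le_max_left (t + z) 0
          linarith
  intro n
  induction n with
  | zero =>
    intro x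
    rw [kpow, Kernel.id_apply, lintegral_dirac' _ hmeas]
    exact ENNReal.ofReal_le_ofReal (by simp)
  | succ n ih =>
    intro x
    rw [show kpow P (n+1) = P ∘ₖ kpow P n from rfl, Kernel.lintegral_comp _ _ _ hmeas]
    have step2 : ∫⁻ y, ENNReal.ofReal (y + 1 - μm) ∂((kpow P n) x)
        ≤ ∫⁻ y, (∫⁻ w, ENNReal.ofReal (w + 1) ∂(P y)) ∂((kpow P n) x) :=
      lintegral_mono fun y => hstep y
    refine le_trans ?_ step2
    have hsub : ∀ y : ℝ, ENNReal.ofReal (y + 1 - μm)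
        = ENNReal.ofReal (y + 1) - ENNReal.ofReal μm := fun y =>
      ENNReal.ofReal_sub _ hμm.le
    calc ENNReal.ofReal (x + 1 - μm * (n + 1 : ℕ))
        = ENNReal.ofReal ((x + 1 - μm * n) - μm) := by
          congr 1; push_cast; ring
      _ = ENNReal.ofReal (x + 1 - μm * n) - ENNReal.ofReal μm :=
          ENNReal.ofReal_sub _ hμm.le
      _ ≤ (∫⁻ y, ENNReal.ofReal (y + 1) ∂((kpow P n) x)) - ENNReal.ofReal μm :=
          tsub_le_tsub_right (ih x) _
      _ = (∫⁻ y, ENNReal.ofReal (y + 1) ∂((kpow P n) x))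
            - ∫⁻ _, ENNReal.ofReal μm ∂((kpow P n) x) := by
          rw [lintegral_const, measure_univ, mul_one]
      _ ≤ ∫⁻ y, (ENNReal.ofReal (y + 1) - ENNReal.ofReal μm) ∂((kpow P n) x) :=
          lintegral_sub_le _ _ measurable_const
      _ = ∫⁻ y, ENNReal.ofReal (y + 1 - μm) ∂((kpow P n) x) := by
          refine lintegral_congr fun y => ?_
          rw [hsub y]

lemma main_ind (hP : ∀ x : ℝ, P x = ν.map (fun z => max (x + z) 0))
    (hint : Integrable (fun z : ℝ => z) ν)
    (μm : ℝ) (hmean : ∫ z, z ∂ν = -μm) (hμm : 0 < μm)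
    (hsq : Integrable (fun z : ℝ => (max z 0) ^ 2) ν)
    (K : ℝ) (hK : 0 ≤ K)
    (hdrift : ∀ y : ℝ, 0 ≤ y →
      ∫ z, (max (y + z) 0 + 1) ^ 2 ∂ν ≤ (y + 1) ^ 2 - (7 / 4 * μm) * (y + 1) + K) :
    ∀ n : ℕ, ∀ x : ℝ, 0 ≤ x →
      (∫⁻ y, ENNReal.ofReal ((y + 1) ^ 2) ∂((kpow P n) x))
          + ENNReal.ofReal (7 / 4 * μm)
            * ∑ k ∈ Finset.range n, ENNReal.ofReal (x + 1 - μm * k)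
        ≤ ENNReal.ofReal ((x + 1) ^ 2 + K * n) := by
  have hmeasV : Measurable (fun y : ℝ => ENNReal.ofReal ((y + 1) ^ 2)) := by fun_prop
  have hmeasg : Measurable (fun y : ℝ => ENNReal.ofReal (y + 1)) := by fun_prop
  have hmeasU : Measurable (fun y : ℝ => ∫⁻ w, ENNReal.ofReal ((w + 1) ^ 2) ∂(P y)) :=
    Measurable.lintegral_kernel hmeasV
  intro n
  induction n with
  | zero =>
    intro x hx
    rw [kpow, Kernel.id_apply, lintegral_dirac' _ hmeasV]
    simp
  | succ n ih =>
    intro x hx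
    have hT : (∫⁻ y, ENNReal.ofReal ((y + 1) ^ 2) ∂((kpow P (n+1)) x))
        + ENNReal.ofReal (7 / 4 * μm)
          * (∫⁻ y, ENNReal.ofReal (y + 1) ∂((kpow P n) x))
        ≤ (∫⁻ y, ENNReal.ofReal ((y + 1) ^ 2) ∂((kpow P n) x)) + ENNReal.ofReal K := by
      rw [show kpow P (n+1) = P ∘ₖ kpow P n from rfl, Kernel.lintegral_comp _ _ _ hmeasV]
      rw [← lintegral_const_mul _ hmeasg]
      rw [← lintegral_add_left hmeasU]
      have hle : ∫⁻ y, ((∫⁻ w, ENNReal.ofReal ((w + 1) ^ 2) ∂(P y))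
            + ENNReal.ofReal (7 / 4 * μm) * ENNReal.ofReal (y + 1)) ∂((kpow P n) x)
          ≤ ∫⁻ y, ENNReal.ofReal ((y + 1) ^ 2 + K) ∂((kpow P n) x) := by
        refine lintegral_mono_ae ?_
        filter_upwards [supp_lemma ν P hP n x hx] with y hy
        rw [lift_V ν P hP hint hsq y hy,
          ← ENNReal.ofReal_mul (by positivity : (0:ℝ) ≤ 7 / 4 * μm),
          ← ENNReal.ofReal_add (integral_nonneg fun z => by positivity) (by positivity)]
        refine ENNReal.ofReal_le_ofReal ?_
        have := hdrift y hy
        linarith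
      refine le_trans hle ?_
      have : ∫⁻ y, ENNReal.ofReal ((y + 1) ^ 2 + K) ∂((kpow P n) x)
          = (∫⁻ y, ENNReal.ofReal ((y + 1) ^ 2) ∂((kpow P n) x)) + ENNReal.ofReal K := by
        have heq : ∀ y : ℝ, ENNReal.ofReal ((y + 1) ^ 2 + K)
            = ENNReal.ofReal ((y + 1) ^ 2) + ENNReal.ofReal K := fun y =>
          ENNReal.ofReal_add (by positivity) hK
        rw [lintegral_congr heq, lintegral_add_left hmeasV, lintegral_const,
          measure_univ, mul_one]
      rw [this]
    calc (∫⁻ y, ENNReal.ofReal ((y + 1) ^ 2) ∂((kpow P (n+1)) x))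
        + ENNReal.ofReal (7 / 4 * μm)
          * ∑ k ∈ Finset.range (n+1), ENNReal.ofReal (x + 1 - μm * k)
        = ((∫⁻ y, ENNReal.ofReal ((y + 1) ^ 2) ∂((kpow P (n+1)) x))
            + ENNReal.ofReal (7 / 4 * μm) * ENNReal.ofReal (x + 1 - μm * n))
          + ENNReal.ofReal (7 / 4 * μm)
            * ∑ k ∈ Finset.range n, ENNReal.ofReal (x + 1 - μm * k) := by
          rw [Finset.sum_range_succ, mul_add]
          ring
      _ ≤ ((∫⁻ y, ENNReal.ofReal ((y + 1) ^ 2) ∂((kpow P (n+1)) x))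
            + ENNReal.ofReal (7 / 4 * μm)
              * (∫⁻ y, ENNReal.ofReal (y + 1) ∂((kpow P n) x)))
          + ENNReal.ofReal (7 / 4 * μm)
            * ∑ k ∈ Finset.range n, ENNReal.ofReal (x + 1 - μm * k) := by
          gcongr
          exact G_lower ν P hP hint μm hmean hμm n x
      _ ≤ ((∫⁻ y, ENNReal.ofReal ((y + 1) ^ 2) ∂((kpow P n) x)) + ENNReal.ofReal K)
          + ENNReal.ofReal (7 / 4 * μm)
            * ∑ k ∈ Finset.range n, ENNReal.ofReal (x + 1 - μm * k) :=
          add_le_add hT le_rfl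
      _ = ((∫⁻ y, ENNReal.ofReal ((y + 1) ^ 2) ∂((kpow P n) x))
            + ENNReal.ofReal (7 / 4 * μm)
              * ∑ k ∈ Finset.range n, ENNReal.ofReal (x + 1 - μm * k))
          + ENNReal.ofReal K := by ring
      _ ≤ ENNReal.ofReal ((x + 1) ^ 2 + K * n) + ENNReal.ofReal K :=
          add_le_add (ih x hx) le_rfl
      _ = ENNReal.ofReal ((x + 1) ^ 2 + K * (n + 1 : ℕ)) := by
          rw [← ENNReal.ofReal_add (by positivity) hK]
          congr 1
          push_cast
          ring

end kernellift

lemma small_set_lemma (ν : Measure ℝ) [IsProbabilityMeasure ν]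
    (hint : Integrable (fun z : ℝ => z) ν)
    (μm : ℝ) (hmean : ∫ z, z ∂ν = -μm) (hμm : 0 < μm)
    (P : Kernel ℝ ℝ) [IsMarkovKernel P]
    (hP : ∀ x : ℝ, P x = ν.map (fun z => max (x + z) 0)) (d' : ℝ) :
    IsSmallSet P {x : ℝ | 0 ≤ x ∧ (x + 1) ^ 2 ≤ d'} := by
  -- find η with ν {z ≤ -η} > 0
  obtain ⟨η, hη, hc⟩ : ∃ η : ℝ, 0 < η ∧ 0 < ν {z | z ≤ -η} := by
    by_contra h
    push_neg at h
    have hae : ∀ᵐ z ∂ν, 0 ≤ z := by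
      have h0 : ν {z : ℝ | z < 0} = 0 := by
        have hsub : {z : ℝ | z < 0} ⊆ ⋃ n : ℕ, {z : ℝ | z ≤ -(1/(n+1))} := by
          intro z hz
          obtain ⟨n, hn⟩ := exists_nat_one_div_lt (show (0:ℝ) < -z by simpa using hz)
          exact Set.mem_iUnion.2 ⟨n, by simp only [Set.mem_setOf_eq]; linarith⟩
        refine measure_mono_null hsub (measure_iUnion_null fun n => ?_)
        exact le_antisymm (h (1/(n+1)) (by positivity)) zero_le
      filter_upwards [measure_eq_zero_iff_ae_notMem.mp h0] with z hz
      simpa using hz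
    have : 0 ≤ ∫ z, z ∂ν := integral_nonneg_of_ae hae
    rw [hmean] at this; linarith
  set c : ℝ≥0∞ := ν {z | z ≤ -η} with hcdef
  have hc1 : c ≤ 1 := prob_le_one
  have hcne : c ≠ ⊤ := (lt_of_le_of_lt hc1 one_lt_top).ne
  set m : ℕ := ⌈Real.sqrt d' / η⌉₊ + 1 with hmdef
  have key : ∀ k : ℕ, ∀ x : ℝ, 0 ≤ x → x ≤ k * η → c ^ k ≤ (kpow P k) x {0} := by
    intro k
    induction k with
    | zero =>
      intro x hx0 hxle
      have hx : x = 0 := le_antisymm (by simpa using hxle) hx0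
      subst hx
      rw [kpow, Kernel.id_apply, Measure.dirac_apply]
      simp
    | succ k ih =>
      intro x hx0 hxle
      rw [kpow_succ'_s18, Kernel.comp_apply' _ _ _ (measurableSet_singleton 0)]
      set S : Set ℝ := {y | 0 ≤ y ∧ y ≤ k * η} with hSdef
      have hSm : MeasurableSet S :=
        (measurableSet_le measurable_const measurable_id).inter
          (measurableSet_le measurable_id measurable_const)
      have hPS : c ≤ P x S := by
        rw [hP, Measure.map_apply (meas_maxadd x) hSm]
        refine measure_mono fun z hz => ?_
        simp only [Set.mem_setOf_eq] at hz ⊢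
        constructor
        · exact le_max_right _ _
        · refine max_le ?_ (by positivity)
          push_cast at hxle
          linarith
      calc c ^ (k + 1) = c ^ k * c := by ring
        _ ≤ c ^ k * P x S := by gcongr
        _ = ∫⁻ _ in S, c ^ k ∂(P x) := by rw [setLIntegral_const]
        _ ≤ ∫⁻ y in S, (kpow P k) y {0} ∂(P x) := by
            refine setLIntegral_mono ((kpow P k).measurable_coe (measurableSet_singleton 0)) ?_
            intro y hy
            exact ih y hy.1 hy.2
        _ ≤ ∫⁻ y, (kpow P k) y {0} ∂(P x) := setLIntegral_le_lintegral _ _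
  refine ⟨m, Nat.succ_pos _, c.toReal ^ m, ?_, ?_, Measure.dirac 0, inferInstance, ?_⟩
  · exact pow_pos (ENNReal.toReal_pos hc.ne' hcne) m
  · exact pow_le_one₀ ENNReal.toReal_nonneg (by simpa using ENNReal.toReal_mono one_ne_top hc1)
  · intro x hx E hE
    obtain ⟨hx0, hxd⟩ := hx
    have hofr : ENNReal.ofReal (c.toReal ^ m) = c ^ m := by
      rw [ENNReal.ofReal_pow ENNReal.toReal_nonneg, ENNReal.ofReal_toReal hcne]
    by_cases h0 : (0:ℝ) ∈ E
    · have h1 : Measure.dirac (0:ℝ) E = 1 := by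
        rw [Measure.dirac_apply]; simp [h0]
      rw [h1, mul_one, hofr]
      have hxm : x ≤ m * η := by
        have hx1 : x + 1 ≤ Real.sqrt d' := by
          have := Real.sqrt_le_sqrt hxd
          rwa [Real.sqrt_sq (by linarith)] at this
        have h2 : Real.sqrt d' ≤ (⌈Real.sqrt d' / η⌉₊ : ℝ) * η := by
          rw [← div_le_iff₀ hη]
          exact Nat.le_ceil _
        have : (⌈Real.sqrt d' / η⌉₊ : ℝ) * η ≤ m * η := by
          rw [hmdef]; push_cast
          nlinarith
        linarith
      calc c ^ m ≤ (kpow P m) x {0} := key m x hx0 hxm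
        _ ≤ (kpow P m) x E := measure_mono (Set.singleton_subset_iff.2 h0)
    · have h1 : Measure.dirac (0:ℝ) E = 0 := by
        rw [Measure.dirac_apply]; simp [h0]
      rw [h1, mul_zero]; exact zero_le

/-- the random walk on the half-line `X_{n+1} = (X_n + Z_{n+1})⁺` with
`𝔼[Z] = −μ < 0` and `𝔼[(Z⁺)²] < ∞` is tame with respect to `V(x) = (x+1)²`: there are a
small sublevel set `[V ≤ d']`, constants `λ̃ > 0`, `β ∈ (0, 1/4)` and `b' < ∞` such that,
with `F(z) = ⌈λ̃ z^{1/2}⌉` for `z > d'` and `F(z) = 1` for `z ≤ d'`, the subsampled kernel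
satisfies `Q_F V(x) ≤ β·V(x) + b'·1_{[V ≤ d']}(x)` for all `x ≥ 0`. -/
theorem stmt_18 (ν : Measure ℝ) [IsProbabilityMeasure ν]
    (hint : Integrable (fun z : ℝ => z) ν)
    (μm : ℝ) (hmean : ∫ z, z ∂ν = -μm) (hμm : 0 < μm)
    (hsq : Integrable (fun z : ℝ => (max z 0) ^ 2) ν)
    (P : ProbabilityTheory.Kernel ℝ ℝ) [ProbabilityTheory.IsMarkovKernel P]
    (hP : ∀ x : ℝ, P x = ν.map (fun z => max (x + z) 0)) :
    ∃ d' : ℝ, 1 ≤ d' ∧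
      IsSmallSet P {x : ℝ | 0 ≤ x ∧ (x + 1) ^ 2 ≤ d'} ∧
      ∃ lamt : ℝ, 0 < lamt ∧ ∃ β : ℝ, 0 < β ∧ β < 1 / 4 ∧ ∃ b' : ℝ,
        ∀ x : ℝ, 0 ≤ x →
          ∫⁻ y, ENNReal.ofReal ((y + 1) ^ 2)
              ∂((kpow P (if (x + 1) ^ 2 ≤ d' then 1
                  else ⌈lamt * Real.sqrt ((x + 1) ^ 2)⌉₊)) x)
            ≤ ENNReal.ofReal (β * (x + 1) ^ 2
                + (if (x + 1) ^ 2 ≤ d' then b' else 0)) := by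
  obtain ⟨K, hK0, hdrift⟩ := drift_lemma ν hint μm hmean hμm hsq
  set g0 : ℝ := max 1 ((40 / 3) * (K / μm + K)) with hg0def
  clear_value g0
  have hg01 : (1:ℝ) ≤ g0 := by rw [hg0def]; exact le_max_left _ _
  have hg0ge : (40 / 3) * (K / μm + K) ≤ g0 := by rw [hg0def]; exact le_max_right _ _
  refine ⟨g0 ^ 2 + 1, by nlinarith, small_set_lemma ν hint μm hmean hμm P hP _,
    1 / μm, by positivity, 1 / 5, by norm_num, by norm_num, (g0 ^ 2 + 1) + K, ?_⟩
  intro x hx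
  have hsqrt : Real.sqrt ((x + 1) ^ 2) = x + 1 := Real.sqrt_sq (by linarith)
  by_cases hcase : (x + 1) ^ 2 ≤ g0 ^ 2 + 1
  · -- small region : one step
    simp only [if_pos hcase]
    have hk1 : kpow P 1 = P := by
      rw [show kpow P 1 = P ∘ₖ kpow P 0 from rfl, show kpow P 0 = Kernel.id from rfl,
        Kernel.comp_id]
    rw [hk1, lift_V ν P hP hint hsq x hx]
    refine ENNReal.ofReal_le_ofReal ?_
    have hd := hdrift x hx
    have hpos : 0 ≤ 7 / 4 * μm * (x + 1) := by positivity
    have hb : 0 ≤ 1 / 5 * (x + 1) ^ 2 := by positivity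
    linarith
  · -- large region
    simp only [if_neg hcase]
    rw [hsqrt]
    set g : ℝ := x + 1 with hgdef
    clear_value g
    have hg1 : (1:ℝ) ≤ g := by simp [hgdef]; linarith
    have hgg0 : g0 < g := by
      by_contra hcon
      push_neg at hcon
      exact hcase (by nlinarith)
    set n : ℕ := ⌈1 / μm * g⌉₊ with hndef
    clear_value n
    have hn1 : 1 ≤ n := by
      rw [hndef]
      exact Nat.one_le_iff_ne_zero.mpr (Nat.ceil_pos.mpr (by positivity)).ne'
    have hn_low : g / μm ≤ (n:ℝ) := by
      rw [hndef]
      calc g / μm = 1 / μm * g := by ring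
        _ ≤ _ := Nat.le_ceil _
    have hn_up : (n:ℝ) < g / μm + 1 := by
      rw [hndef]
      have h1 := Nat.ceil_lt_add_one (show (0:ℝ) ≤ 1 / μm * g by positivity)
      have h2 : g / μm = 1 / μm * g := by ring
      linarith
    have hterm : ∀ k ∈ Finset.range n, 0 ≤ x + 1 - μm * k := by
      intro k hk
      have hk' : (k:ℝ) ≤ (n:ℝ) - 1 := by
        have := Finset.mem_range.mp hk
        have : (k:ℝ) + 1 ≤ (n:ℝ) := by exact_mod_cast this
        linarith
      have h2 : μm * ((n:ℝ) - 1) < g := by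
        have h3 : (n:ℝ) - 1 < g / μm := by linarith
        calc μm * ((n:ℝ) - 1) < μm * (g / μm) := by
              exact mul_lt_mul_of_pos_left h3 hμm
          _ = g := by field_simp
      have h4 : μm * (k:ℝ) ≤ μm * ((n:ℝ) - 1) :=
        mul_le_mul_of_nonneg_left hk' hμm.le
      simp only [hgdef] at h2
      linarith
    set Sreal : ℝ := ∑ k ∈ Finset.range n, (x + 1 - μm * k) with hSdef
    clear_value Sreal
    have hSnonneg : 0 ≤ Sreal := hSdef ▸ Finset.sum_nonneg hterm
    have hT : 2 * (∑ k ∈ Finset.range n, (k:ℝ)) = (n:ℝ) * ((n:ℝ) - 1) := by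
      have h := congrArg (fun m : ℕ => (m : ℝ)) (Finset.sum_range_id_mul_two n)
      push_cast [Nat.cast_sub hn1] at h
      linarith
    have hS : Sreal = (n:ℝ) * g - μm * (∑ k ∈ Finset.range n, (k:ℝ)) := by
      rw [hSdef, Finset.sum_sub_distrib, Finset.sum_const, Finset.card_range,
        ← Finset.mul_sum, nsmul_eq_mul, hgdef]
    have hSlow : 7 / 8 * g ^ 2 ≤ (7 / 4 * μm) * Sreal := by
      have hbr : g / 2 ≤ g - μm * ((n:ℝ) - 1) / 2 := by
        have h3 : (n:ℝ) - 1 < g / μm := by linarith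
        have h2 : μm * ((n:ℝ) - 1) < g := by
          calc μm * ((n:ℝ) - 1) < μm * (g / μm) := mul_lt_mul_of_pos_left h3 hμm
            _ = g := by field_simp
        linarith
      have hNpos : (0:ℝ) < (n:ℝ) := by
        have : (0:ℝ) < g / μm := by positivity
        linarith
      have hmul : (g / μm) * (g / 2) ≤ (n:ℝ) * (g - μm * ((n:ℝ) - 1) / 2) :=
        mul_le_mul hn_low hbr (by positivity) hNpos.le
      have hid : (7 / 4 * μm) * ((g / μm) * (g / 2)) = 7 / 8 * g ^ 2 := by
        field_simp
        ring
      have h5 : (7 / 4 * μm) * ((g / μm) * (g / 2))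
          ≤ (7 / 4 * μm) * ((n:ℝ) * (g - μm * ((n:ℝ) - 1) / 2)) :=
        mul_le_mul_of_nonneg_left hmul (by positivity)
      have h6 : (7 / 4 * μm) * Sreal
          = (7 / 4 * μm) * ((n:ℝ) * (g - μm * ((n:ℝ) - 1) / 2)) := by
        rw [hS]
        have : (∑ k ∈ Finset.range n, (k:ℝ)) = (n:ℝ) * ((n:ℝ) - 1) / 2 := by
          linarith
        rw [this]
        ring
      rw [h6]
      linarith
    have hKn : K * (n:ℝ) ≤ 3 / 40 * g ^ 2 := by
      have t1 : K * (n:ℝ) ≤ K * (g / μm + 1) :=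
        mul_le_mul_of_nonneg_left hn_up.le hK0
      have tK : K ≤ K * g := le_mul_of_one_le_right hK0 hg1
      have t2 : K * (g / μm + 1) ≤ (K / μm + K) * g := by
        have e1 : K * (g / μm + 1) = K / μm * g + K := by ring
        have e2 : (K / μm + K) * g = K / μm * g + K * g := by ring
        linarith
      have t3 : (K / μm + K) * g ≤ (3 / 40 * g0) * g := by
        refine mul_le_mul_of_nonneg_right (by linarith) (by linarith)
      have t4 : (3 / 40 * g0) * g ≤ 3 / 40 * (g * g) := by
        have h7 : g0 * g ≤ g * g := mul_le_mul_of_nonneg_right hgg0.le (by linarith)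
        linarith
      have : g * g = g ^ 2 := by ring
      linarith [this ▸ t4]
    -- assemble in ℝ≥0∞
    have hMain := main_ind ν P hP hint μm hmean hμm hsq K hK0 hdrift n x hx
    have hSig : ∑ k ∈ Finset.range n, ENNReal.ofReal (x + 1 - μm * k)
        = ENNReal.ofReal Sreal := by
      rw [hSdef]
      exact (ENNReal.ofReal_sum_of_nonneg hterm).symm
    rw [hSig] at hMain
    set X : ℝ≥0∞ := ENNReal.ofReal (7 / 4 * μm) * ENNReal.ofReal Sreal with hXdef
    clear_value X
    have hXne : X ≠ ⊤ := by
      rw [hXdef]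
      exact ENNReal.mul_ne_top ENNReal.ofReal_ne_top ENNReal.ofReal_ne_top
    have hreal : (x + 1) ^ 2 + K * n ≤ 1 / 5 * (x + 1) ^ 2 + (7 / 4 * μm) * Sreal := by
      have hgg : (x + 1) ^ 2 = g ^ 2 := by rw [hgdef]
      rw [hgg]
      linarith
    have hkey : ENNReal.ofReal ((x + 1) ^ 2 + K * n)
        ≤ ENNReal.ofReal (1 / 5 * (x + 1) ^ 2) + X := by
      rw [hXdef, ← ENNReal.ofReal_mul (by positivity : (0:ℝ) ≤ 7 / 4 * μm),
        ← ENNReal.ofReal_add (by positivity) (by positivity : 0 ≤ (7 / 4 * μm) * Sreal)]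
      exact ENNReal.ofReal_le_ofReal hreal
    have hfinal : (∫⁻ y, ENNReal.ofReal ((y + 1) ^ 2) ∂((kpow P n) x)) + X
        ≤ ENNReal.ofReal (1 / 5 * (x + 1) ^ 2) + X := le_trans hMain hkey
    have := (ENNReal.add_le_add_iff_right hXne).mp hfinal
    rw [add_zero, hgdef]
    exact this
end
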